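/- arXiv:1602.02495 — 8 statements merged into one kernel-verified Lean document; each statement's English description precedes it below -/
import Mathlib

section
/- Let G be a finite simple graph and let P1 and P2 be vertex-disjoint paths in G (each path having at least one vertex) such that every vertex v in End(P1) ∪ End(P2) satisfies d_{Ḡ}(v) ≤ v(P1)/2 − 1, where Ḡ is the complement of G. Then there exist an edge f ∈ E(P1) and two edges e1, e2 ∈ E(G) such that ((E(P1) ∪ E(P2)) \ {f}) ∪ {e1, e2} is the edge set of a path P of G with V(P) = V(P1) ∪ V(P2) and End(P) ⊆ End(P1) ∪ End(P2). -/
open SimpleGraph in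
lemma rotation_aux {V : Type*} [DecidableEq V] {G : SimpleGraph V}
    {u₂ w₂ w₁ : V} (P₂ : G.Walk u₂ w₂) (hP₂ : P₂.IsPath) :
    ∀ {a : V} (W : G.Walk a w₁), W.IsPath → List.Disjoint W.support P₂.support →
    ∀ d ∈ W.darts, G.Adj d.fst u₂ → G.Adj w₂ d.snd →
    ∃ f ∈ W.edges, ∃ e₁ ∈ G.edgeSet, ∃ e₂ ∈ G.edgeSet, ∃ Q : G.Walk a w₁, Q.IsPath ∧
      {e : Sym2 V | e ∈ Q.edges} =
        (({e : Sym2 V | e ∈ W.edges} ∪ {e : Sym2 V | e ∈ P₂.edges}) \ {f}) ∪ {e₁, e₂} ∧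
      {x : V | x ∈ Q.support} = {x : V | x ∈ W.support} ∪ {x : V | x ∈ P₂.support} := by
  intro a W
  induction W with
  | nil => intro _ _ d hd; simp [Walk.darts] at hd
  | @cons a b w₁ h W ih =>
    intro hpath hdisj d hd h1 h2
    rw [Walk.darts_cons, List.mem_cons] at hd
    have hWpath : W.IsPath := hpath.of_cons
    have haW : a ∉ W.support := by
      have := hpath.support_nodup; simp at this; exact fun hc => this.1 hc
    have hdisjW : List.Disjoint W.support P₂.support := by
      intro x hx; exact hdisj (by simp [hx])
    have haP₂ : a ∉ P₂.support := fun hc => hdisj (by simp) hc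
    rcases hd with rfl | hd
    · -- d is the first dart : fst = a, snd = b
      simp only at h1 h2
      have hw₂ : w₂ ∈ P₂.support := P₂.end_mem_support
      have hu₂ : u₂ ∈ P₂.support := P₂.start_mem_support
      have hab₂ : s(a, b) ∉ P₂.edges := fun hc =>
        haP₂ (Walk.fst_mem_support_of_mem_edges _ hc)
      have habW : s(a, b) ∉ W.edges := fun hc =>
        haW (Walk.fst_mem_support_of_mem_edges _ hc)
      refine ⟨s(a, b), by simp, s(a, u₂), h1, s(w₂, b), h2,
        Walk.cons h1 (P₂.append (Walk.cons h2 W)), ?_, ?_, ?_⟩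
      · rw [Walk.cons_isPath_iff]
        constructor
        · rw [Walk.isPath_def, Walk.support_append, Walk.support_cons]
          rw [List.nodup_append]
          refine ⟨hP₂.support_nodup, ?_, ?_⟩
          · simpa using hWpath.support_nodup
          · intro x hx y hy hxy
            subst hxy
            exact hdisjW (by simpa using hy) hx
        · rw [Walk.mem_support_append_iff]
          push_neg
          refine ⟨haP₂, ?_⟩
          simp only [Walk.support_cons, List.mem_cons]
          push_neg
          exact ⟨fun hc => haP₂ (hc ▸ hw₂), haW⟩
      · ext e
        simp only [Walk.edges_cons, Walk.edges_append, Set.mem_setOf_eq, Set.mem_union,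
          Set.mem_diff, Set.mem_insert_iff, Set.mem_singleton_iff, List.mem_cons,
          List.mem_append]
        constructor
        · rintro (rfl | (hp | (rfl | hw)))
          · right; left; rfl
          · left; exact ⟨Or.inr hp, fun hc => hab₂ (hc ▸ hp)⟩
          · right; right; rfl
          · left; exact ⟨Or.inl (Or.inr hw), fun hc => habW (hc ▸ hw)⟩
        · rintro (⟨(rfl | h') | h', hne⟩ | (rfl | rfl))
          · exact absurd rfl hne
          · right; right; right; exact h'
          · right; left; exact h'
          · left; rfl
          · right; right; left; rfl
      · ext x
        simp only [Set.mem_setOf_eq, Set.mem_union, Walk.support_cons,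
          Walk.mem_support_append_iff, List.mem_cons]
        constructor
        · rintro (rfl | hp | rfl | hw)
          · exact Or.inl (Or.inl rfl)
          · exact Or.inr hp
          · exact Or.inr hw₂
          · exact Or.inl (Or.inr hw)
        · rintro ((rfl | hw) | hp)
          · exact Or.inl rfl
          · right; right; right; exact hw
          · right; left; exact hp
    · -- inductive case
      obtain ⟨f, hf, e₁, he₁, e₂, he₂, Q, hQ, hedges, hsupp⟩ :=
        ih hWpath hdisjW d hd h1 h2
      have haQ : a ∉ Q.support := by
        intro hc
        have hx : a ∈ ({x | x ∈ W.support} ∪ {x | x ∈ P₂.support} : Set V) := by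
          rw [← hsupp]; exact hc
        rcases hx with hx | hx
        · exact haW hx
        · exact haP₂ hx
      have habf : s(a, b) ≠ f := fun hc =>
        haW (Walk.fst_mem_support_of_mem_edges W (hc ▸ hf))
      refine ⟨f, by simp [hf], e₁, he₁, e₂, he₂, Walk.cons h Q, hQ.cons haQ, ?_, ?_⟩
      · ext e
        have := Set.ext_iff.mp hedges e
        simp only [Set.mem_setOf_eq, Set.mem_union, Set.mem_diff, Set.mem_insert_iff,
          Set.mem_singleton_iff] at this ⊢
        simp only [Walk.edges_cons, List.mem_cons]
        constructor
        · rintro (rfl | hq)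
          · exact Or.inl ⟨Or.inl (Or.inl rfl), habf⟩
          · rcases this.mp hq with ⟨hm | hm, hne⟩ | hm
            · exact Or.inl ⟨Or.inl (Or.inr hm), hne⟩
            · exact Or.inl ⟨Or.inr hm, hne⟩
            · exact Or.inr hm
        · rintro (⟨(rfl | hm) | hm, hne⟩ | hm)
          · exact Or.inl rfl
          · exact Or.inr (this.mpr (Or.inl ⟨Or.inl hm, hne⟩))
          · exact Or.inr (this.mpr (Or.inl ⟨Or.inr hm, hne⟩))
          · exact Or.inr (this.mpr (Or.inr hm))
      · ext x
        have := Set.ext_iff.mp hsupp x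
        simp only [Set.mem_setOf_eq, Set.mem_union] at this ⊢
        simp only [Walk.support_cons, List.mem_cons]
        constructor
        · rintro (rfl | hq)
          · exact Or.inl (Or.inl rfl)
          · rcases this.mp hq with hm | hm
            · exact Or.inl (Or.inr hm)
            · exact Or.inr hm
        · rintro ((rfl | hm) | hm)
          · exact Or.inl rfl
          · exact Or.inr (this.mpr (Or.inl hm))
          · exact Or.inr (this.mpr (Or.inr hm))

/-- **Rotation lemma.** Let `P₁`, `P₂` be vertex-disjoint paths in a finite simple graph `G`
such that every endpoint `z` of `P₁` or `P₂` satisfies `d_{Ḡ}(z) ≤ v(P₁)/2 - 1`.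
Then there is an edge `f ∈ E(P₁)` and edges `e₁, e₂ ∈ E(G)` such that
`((E(P₁) ∪ E(P₂)) \ {f}) ∪ {e₁, e₂}` is the edge set of a path `P` of `G` with
`V(P) = V(P₁) ∪ V(P₂)` and `End(P) ⊆ End(P₁) ∪ End(P₂)`. -/
theorem rotation_two_paths {V : Type*} [Fintype V] [DecidableEq V]
    (G : SimpleGraph V) [DecidableRel G.Adj]
    {u₁ w₁ u₂ w₂ : V} (P₁ : G.Walk u₁ w₁) (P₂ : G.Walk u₂ w₂)
    (hP₁ : P₁.IsPath) (hP₂ : P₂.IsPath)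
    (hdisj : List.Disjoint P₁.support P₂.support)
    (hdeg : ∀ z ∈ ({u₁, w₁, u₂, w₂} : Set V),
      (Gᶜ.degree z : ℝ) ≤ (P₁.support.length : ℝ) / 2 - 1) :
    ∃ f ∈ P₁.edges, ∃ e₁ ∈ G.edgeSet, ∃ e₂ ∈ G.edgeSet,
      ∃ (a b : V) (P : G.Walk a b), P.IsPath ∧
        {e : Sym2 V | e ∈ P.edges} =
          (({e : Sym2 V | e ∈ P₁.edges} ∪ {e : Sym2 V | e ∈ P₂.edges}) \ {f}) ∪ {e₁, e₂} ∧
        {x : V | x ∈ P.support} = {x : V | x ∈ P₁.support} ∪ {x : V | x ∈ P₂.support} ∧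
        a ∈ ({u₁, w₁, u₂, w₂} : Set V) ∧ b ∈ ({u₁, w₁, u₂, w₂} : Set V) := by
  open SimpleGraph in
  have hdart : ∃ d ∈ P₁.darts, G.Adj d.fst u₂ ∧ G.Adj w₂ d.snd := by
    classical
    set n := P₁.support.length with hn
    have hnodup : P₁.support.Nodup := hP₁.support_nodup
    have hdartsnodup : P₁.darts.Nodup := Walk.darts_nodup_of_support_nodup hnodup
    have hnlen : n = P₁.length + 1 := by rw [hn, Walk.length_support]
    set D : Finset (G.Dart) := P₁.darts.toFinset with hD
    have hcardD : D.card = P₁.length := by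
      rw [hD, List.toFinset_card_of_nodup hdartsnodup, Walk.length_darts]
    set S : Finset V := P₁.support.toFinset with hS
    have hcardS : S.card = n := by
      rw [hS, List.toFinset_card_of_nodup hnodup]
    -- generic counting claim
    have key : ∀ z ∈ P₂.support, (Gᶜ.degree z : ℝ) ≤ (n : ℝ) / 2 - 1 →
        ∀ p : V → Prop, ∀ _ : DecidablePred p, (∀ x, p x ↔ G.Adj x z) →
        ((n : ℝ) / 2 + 1) ≤ ((S.filter p).card : ℝ) := by
      intro z hz hzdeg p _ hp
      have hsub : S.filter (fun x => ¬ p x) ⊆ Gᶜ.neighborFinset z := by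
        intro x hx
        rw [Finset.mem_filter] at hx
        obtain ⟨hxS, hnp⟩ := hx
        rw [hS, List.mem_toFinset] at hxS
        rw [mem_neighborFinset, compl_adj]
        refine ⟨fun hc => hdisj hxS (hc ▸ hz), fun hc => hnp ((hp x).mpr hc.symm)⟩
      have h1 : (S.filter (fun x => ¬ p x)).card ≤ Gᶜ.degree z := by
        rw [degree]; exact Finset.card_le_card hsub
      have h2 : (S.filter p).card + (S.filter (fun x => ¬ p x)).card = n := by
        rw [Finset.card_filter_add_card_filter_not, hcardS]
      have h2' : ((S.filter p).card : ℝ) = (n : ℝ) - ((S.filter (fun x => ¬ p x)).card : ℝ) := by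
        have := congrArg (Nat.cast (R := ℝ)) h2
        push_cast at this
        linarith
      have h1' : ((S.filter (fun x => ¬ p x)).card : ℝ) ≤ (n : ℝ) / 2 - 1 :=
        le_trans (by exact_mod_cast h1) hzdeg
      linarith
    set A : Finset (G.Dart) := D.filter (fun d => G.Adj d.fst u₂) with hA
    set B : Finset (G.Dart) := D.filter (fun d => G.Adj w₂ d.snd) with hB
    -- |A| ≥ n/2
    have hAcard : (n : ℝ) / 2 ≤ (A.card : ℝ) := by
      have hkey := key u₂ P₂.start_mem_support (hdeg u₂ (by simp)) (fun x => G.Adj x u₂)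
        inferInstance (fun x => Iff.rfl)
      have himg : ((S.filter (fun x => G.Adj x u₂)).erase w₁) ⊆ A.image (·.fst) := by
        intro x hx
        rw [Finset.mem_erase, Finset.mem_filter] at hx
        obtain ⟨hxw, hxS, hadj⟩ := hx
        rw [hS, List.mem_toFinset] at hxS
        have hxdl : x ∈ P₁.support.dropLast := by
          have h3 : P₁.support.dropLast ++ [P₁.support.getLast (P₁.support_ne_nil)]
              = P₁.support := List.dropLast_append_getLast _
          rw [P₁.getLast_support] at h3
          rw [← h3, List.mem_append] at hxS
          rcases hxS with h | h
          · exact h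
          · simp at h; exact absurd h hxw
        rw [← Walk.map_fst_darts] at hxdl
        obtain ⟨d, hd, rfl⟩ := List.mem_map.mp hxdl
        exact Finset.mem_image.mpr ⟨d, Finset.mem_filter.mpr
          ⟨List.mem_toFinset.mpr hd, hadj⟩, rfl⟩
      have hc1 : (S.filter (fun x => G.Adj x u₂)).card - 1 ≤ A.card := by
        calc (S.filter (fun x => G.Adj x u₂)).card - 1
            ≤ ((S.filter (fun x => G.Adj x u₂)).erase w₁).card :=
              Finset.pred_card_le_card_erase
          _ ≤ (A.image (·.fst)).card := Finset.card_le_card himg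
          _ ≤ A.card := Finset.card_image_le
      have hpos : 1 ≤ (S.filter (fun x => G.Adj x u₂)).card := by
        by_contra hc
        push_neg at hc
        interval_cases h : (S.filter (fun x => G.Adj x u₂)).card
        · push_cast at hkey
          have : (0:ℝ) ≤ (n:ℝ) := by positivity
          linarith
      have : ((S.filter (fun x => G.Adj x u₂)).card : ℝ) - 1 ≤ (A.card : ℝ) := by
        have := congrArg (Nat.cast (R := ℝ)) (rfl : (S.filter (fun x => G.Adj x u₂)).card = _)
        have h' : (((S.filter (fun x => G.Adj x u₂)).card - 1 : ℕ) : ℝ)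
            = ((S.filter (fun x => G.Adj x u₂)).card : ℝ) - 1 := by
          rw [Nat.cast_sub hpos]; norm_num
        calc ((S.filter (fun x => G.Adj x u₂)).card : ℝ) - 1
            = (((S.filter (fun x => G.Adj x u₂)).card - 1 : ℕ) : ℝ) := h'.symm
          _ ≤ (A.card : ℝ) := by exact_mod_cast hc1
      linarith
    -- |B| ≥ n/2
    have hBcard : (n : ℝ) / 2 ≤ (B.card : ℝ) := by
      have hkey := key w₂ P₂.end_mem_support (hdeg w₂ (by simp)) (fun x => G.Adj w₂ x)
        inferInstance (fun x => G.adj_comm _ _)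
      have himg : ((S.filter (fun x => G.Adj w₂ x)).erase u₁) ⊆ B.image (·.snd) := by
        intro x hx
        rw [Finset.mem_erase, Finset.mem_filter] at hx
        obtain ⟨hxu, hxS, hadj⟩ := hx
        rw [hS, List.mem_toFinset] at hxS
        have hxtl : x ∈ P₁.support.tail := by
          rw [P₁.support_eq_cons, List.mem_cons] at hxS
          rcases hxS with h | h
          · exact absurd h hxu
          · exact h
        rw [← Walk.map_snd_darts] at hxtl
        obtain ⟨d, hd, rfl⟩ := List.mem_map.mp hxtl
        exact Finset.mem_image.mpr ⟨d, Finset.mem_filter.mpr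
          ⟨List.mem_toFinset.mpr hd, hadj⟩, rfl⟩
      have hc1 : (S.filter (fun x => G.Adj w₂ x)).card - 1 ≤ B.card := by
        calc (S.filter (fun x => G.Adj w₂ x)).card - 1
            ≤ ((S.filter (fun x => G.Adj w₂ x)).erase u₁).card :=
              Finset.pred_card_le_card_erase
          _ ≤ (B.image (·.snd)).card := Finset.card_le_card himg
          _ ≤ B.card := Finset.card_image_le
      have hpos : 1 ≤ (S.filter (fun x => G.Adj w₂ x)).card := by
        by_contra hc
        push_neg at hc
        interval_cases h : (S.filter (fun x => G.Adj w₂ x)).card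
        · push_cast at hkey
          have : (0:ℝ) ≤ (n:ℝ) := by positivity
          linarith
      have : ((S.filter (fun x => G.Adj w₂ x)).card : ℝ) - 1 ≤ (B.card : ℝ) := by
        have h' : (((S.filter (fun x => G.Adj w₂ x)).card - 1 : ℕ) : ℝ)
            = ((S.filter (fun x => G.Adj w₂ x)).card : ℝ) - 1 := by
          rw [Nat.cast_sub hpos]; norm_num
        calc ((S.filter (fun x => G.Adj w₂ x)).card : ℝ) - 1
            = (((S.filter (fun x => G.Adj w₂ x)).card - 1 : ℕ) : ℝ) := h'.symm
          _ ≤ (B.card : ℝ) := by exact_mod_cast hc1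
      linarith
    -- intersection nonempty
    have hunion : (A ∪ B).card ≤ D.card := by
      apply Finset.card_le_card
      intro d hd
      rcases Finset.mem_union.mp hd with h | h
      · exact Finset.mem_of_mem_filter _ h
      · exact Finset.mem_of_mem_filter _ h
    have hiu : (A ∩ B).card + (A ∪ B).card = A.card + B.card :=
      Finset.card_inter_add_card_union A B
    have hne : (A ∩ B).Nonempty := by
      rw [← Finset.card_pos]
      by_contra hc
      push_neg at hc
      interval_cases h : (A ∩ B).card
      · rw [zero_add] at hiu
        have h1 : ((A ∪ B).card : ℝ) ≤ (D.card : ℝ) := by exact_mod_cast hunion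
        have h2 : ((A ∪ B).card : ℝ) = (A.card : ℝ) + (B.card : ℝ) := by
          exact_mod_cast congrArg (Nat.cast (R := ℝ)) hiu
        have h3 : (D.card : ℝ) = (n : ℝ) - 1 := by
          rw [hcardD, hnlen]; push_cast; ring
        linarith
    obtain ⟨d, hd⟩ := hne
    rw [Finset.mem_inter, hA, hB, Finset.mem_filter, Finset.mem_filter] at hd
    exact ⟨d, List.mem_toFinset.mp hd.1.1, hd.1.2, hd.2.2⟩
  obtain ⟨d, hd, h1, h2⟩ := hdart
  obtain ⟨f, hf, e₁, he₁, e₂, he₂, Q, hQ, hedges, hsupp⟩ :=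
    rotation_aux P₂ hP₂ P₁ hP₁ hdisj d hd h1 h2
  exact ⟨f, hf, e₁, he₁, e₂, he₂, u₁, w₁, Q, hQ, hedges, hsupp, by simp, by simp⟩
end

section
/- Let G be a finite simple graph on n vertices and let P1, P2, …, Pt be pairwise vertex-disjoint paths in G such that the union of their vertex sets is V(G). Suppose that every vertex v in ⋃_{i=1}^t End(Pi) satisfies d_{Ḡ}(v) ≤ n/(2t) − 1, where Ḡ is the complement of G. Then there exists a set E* ⊆ E(G) of at most 2t − 2 edges such that ⋃_{i=1}^t E(Pi) ∪ E* contains the edge set of a Hamilton path P of G (a path passing through every vertex of G) with End(P) ⊆ ⋃_{i=1}^t End(Pi). -/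
section helpers
open SimpleGraph List

variable {V : Type*} [DecidableEq V] {G : SimpleGraph V} [DecidableRel G.Adj]

lemma lemB {a b c d : V} (P : G.Walk a b) (Q : G.Walk c d)
    (hP : P.IsPath) (hQ : Q.IsPath)
    (hdisj : List.Disjoint P.support Q.support)
    (hcount : P.support.dropLast.countP (fun x => !decide (G.Adj c x)) +
      P.support.tail.countP (fun x => !decide (G.Adj d x)) < P.length) :
    ∃ R : G.Walk a b, R.IsPath ∧ (∀ x, x ∈ R.support ↔ x ∈ P.support ∨ x ∈ Q.support) ∧
      ∃ e1 e2, e1 ∈ G.edgeSet ∧ e2 ∈ G.edgeSet ∧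
        ∀ e ∈ R.edges, e ∈ P.edges ∨ e ∈ Q.edges ∨ e = e1 ∨ e = e2 := by
  induction P with
  | nil => simp at hcount
  | @cons a a' b h p ih =>
    have hsupp : (SimpleGraph.Walk.cons h p).support = a :: p.support := rfl
    have hpne : p.support ≠ [] := p.support_ne_nil
    have hdl : (SimpleGraph.Walk.cons h p).support.dropLast = a :: p.support.dropLast := by
      rw [hsupp, List.dropLast_cons_of_ne_nil hpne]
    have htl : (SimpleGraph.Walk.cons h p).support.tail = p.support := rfl
    have hpsupp : p.support = a' :: p.support.tail := p.support_eq_cons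
    have haQ : a ∉ Q.support := fun hx => hdisj (by simp [hsupp]) hx
    have hap : a ∉ p.support := by
      have := hP.support_nodup
      rw [hsupp, List.nodup_cons] at this
      exact this.1
    by_cases hgood : G.Adj c a ∧ G.Adj d a'
    · refine ⟨SimpleGraph.Walk.cons hgood.1.symm (Q.append (SimpleGraph.Walk.cons hgood.2 p)),
        ?_, ?_, s(a, c), s(d, a'), ?_, ?_, ?_⟩
      · rw [SimpleGraph.Walk.isPath_def]
        simp only [SimpleGraph.Walk.support_cons, SimpleGraph.Walk.support_append,
          List.tail_cons, List.nodup_cons, List.nodup_append, List.mem_append]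
        refine ⟨?_, hQ.support_nodup, (hP.support_nodup.of_cons), ?_⟩
        · push_neg
          exact ⟨haQ, hap⟩
        · intro x hx y hy hxy
          subst hxy
          exact hdisj (by simp [hsupp, hy]) hx
      · intro x
        simp only [SimpleGraph.Walk.support_cons, SimpleGraph.Walk.support_append,
          List.tail_cons, List.mem_cons, List.mem_append, hsupp]
        tauto
      · exact hgood.1.symm
      · exact hgood.2
      · intro e he
        simp only [SimpleGraph.Walk.edges_cons, SimpleGraph.Walk.edges_append,
          List.mem_cons, List.mem_append] at he ⊢
        tauto
    · have hdisj' : List.Disjoint p.support Q.support := fun x hx => hdisj (by simp [hsupp, hx])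
      have hcount' : p.support.dropLast.countP (fun x => !decide (G.Adj c x)) +
          p.support.tail.countP (fun x => !decide (G.Adj d x)) < p.length := by
        rw [hdl, htl, List.countP_cons] at hcount
        have hq : p.support.countP (fun x => !decide (G.Adj d x)) =
            p.support.tail.countP (fun x => !decide (G.Adj d x)) +
              (if (!decide (G.Adj d a')) = true then 1 else 0) := by
          conv_lhs => rw [hpsupp]
          rw [List.countP_cons]
        rw [hq] at hcount
        simp only [SimpleGraph.Walk.length_cons] at hcount
        by_cases hca : G.Adj c a
        · have hda' : ¬ G.Adj d a' := fun h3 => hgood ⟨hca, h3⟩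
          simp only [hca, hda'] at hcount
          simp at hcount
          omega
        · simp only [hca] at hcount
          simp at hcount
          omega
      obtain ⟨R', hR'path, hR'supp, e1, e2, he1, he2, hedges⟩ :=
        ih hP.of_cons hdisj' hcount'
      have haR' : a ∉ R'.support := by
        intro hx
        rcases (hR'supp a).mp hx with hx | hx
        · exact hap hx
        · exact haQ hx
      refine ⟨SimpleGraph.Walk.cons h R', hR'path.cons haR', ?_, e1, e2, he1, he2, ?_⟩
      · intro x
        rw [SimpleGraph.Walk.support_cons, List.mem_cons, hsupp, List.mem_cons, hR'supp x]
        tauto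
      · intro e he
        rw [SimpleGraph.Walk.edges_cons, List.mem_cons] at he
        rcases he with he | he
        · subst he
          exact Or.inl (by rw [SimpleGraph.Walk.edges_cons]; exact List.mem_cons_self)
        · rcases hedges e he with h' | h' | h' | h'
          · exact Or.inl (by rw [SimpleGraph.Walk.edges_cons]; exact List.mem_cons_of_mem _ h')
          · exact Or.inr (Or.inl h')
          · exact Or.inr (Or.inr (Or.inl h'))
          · exact Or.inr (Or.inr (Or.inr h'))

lemma count_le_deg [Fintype V] {c : V} {l : List V} (hl : l.Nodup) (hc : c ∉ l) :
    l.countP (fun x => !decide (G.Adj c x)) ≤ Gᶜ.degree c := by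
  rw [List.countP_eq_length_filter]
  set m := l.filter (fun x => !decide (G.Adj c x)) with hm
  have hmnd : m.Nodup := hl.filter _
  have hsub : m.toFinset ⊆ Gᶜ.neighborFinset c := by
    intro x hx
    rw [List.mem_toFinset] at hx
    rw [hm, List.mem_filter] at hx
    rw [SimpleGraph.mem_neighborFinset, SimpleGraph.compl_adj]
    refine ⟨fun h => hc (h ▸ hx.1), ?_⟩
    simpa using hx.2
  calc m.length = m.toFinset.card := (List.toFinset_card_of_nodup hmnd).symm
    _ ≤ (Gᶜ.neighborFinset c).card := Finset.card_le_card hsub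
    _ = Gᶜ.degree c := rfl

lemma lemC [Fintype V] {a b c d : V} (P : G.Walk a b) (Q : G.Walk c d)
    (hP : P.IsPath) (hQ : Q.IsPath)
    (hdisj : List.Disjoint P.support Q.support)
    (hcount : Gᶜ.degree a + Gᶜ.degree b + Gᶜ.degree c + Gᶜ.degree d < P.length + Q.length) :
    ∃ (x y : V) (R : G.Walk x y), R.IsPath ∧
      (∀ v, v ∈ R.support ↔ v ∈ P.support ∨ v ∈ Q.support) ∧
      ((x = a ∧ y = b) ∨ (x = c ∧ y = d)) ∧
      ∃ e1 e2, e1 ∈ G.edgeSet ∧ e2 ∈ G.edgeSet ∧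
        ∀ e ∈ R.edges, e ∈ P.edges ∨ e ∈ Q.edges ∨ e = e1 ∨ e = e2 := by
  have hcP : c ∉ P.support := fun hx => hdisj hx Q.start_mem_support
  have hdP : d ∉ P.support := fun hx => hdisj hx Q.end_mem_support
  have haQ : a ∉ Q.support := fun hx => hdisj P.start_mem_support hx
  have hbQ : b ∉ Q.support := fun hx => hdisj P.end_mem_support hx
  have m1 : P.support.dropLast.countP (fun x => !decide (G.Adj c x)) ≤ Gᶜ.degree c :=
    le_trans ((List.dropLast_sublist _).countP_le)
      (count_le_deg hP.support_nodup hcP)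
  have m2 : P.support.tail.countP (fun x => !decide (G.Adj d x)) ≤ Gᶜ.degree d :=
    le_trans ((List.tail_sublist _).countP_le)
      (count_le_deg hP.support_nodup hdP)
  have m3 : Q.support.dropLast.countP (fun x => !decide (G.Adj a x)) ≤ Gᶜ.degree a :=
    le_trans ((List.dropLast_sublist _).countP_le)
      (count_le_deg hQ.support_nodup haQ)
  have m4 : Q.support.tail.countP (fun x => !decide (G.Adj b x)) ≤ Gᶜ.degree b :=
    le_trans ((List.tail_sublist _).countP_le)
      (count_le_deg hQ.support_nodup hbQ)
  by_cases hcase : P.support.dropLast.countP (fun x => !decide (G.Adj c x)) +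
      P.support.tail.countP (fun x => !decide (G.Adj d x)) < P.length
  · obtain ⟨R, h1, h2, e1, e2, h3, h4, h5⟩ := lemB P Q hP hQ hdisj hcase
    exact ⟨a, b, R, h1, h2, Or.inl ⟨rfl, rfl⟩, e1, e2, h3, h4, h5⟩
  · have hcase2 : Q.support.dropLast.countP (fun x => !decide (G.Adj a x)) +
        Q.support.tail.countP (fun x => !decide (G.Adj b x)) < Q.length := by omega
    obtain ⟨R, h1, h2, e1, e2, h3, h4, h5⟩ := lemB Q P hQ hP hdisj.symm hcase2
    exact ⟨c, d, R, h1, fun v => by rw [h2 v]; tauto, Or.inr ⟨rfl, rfl⟩, e1, e2, h3, h4,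
      fun e he => by rcases h5 e he with h | h | h | h <;> tauto⟩

lemma two_largest {α : Type*} (f : α → ℕ) :
    ∀ (L : List α), 2 ≤ L.length →
    ∃ (x y : α) (L' : List α), L.Perm (x :: y :: L') ∧ ∀ z ∈ L', f z ≤ f x ∧ f z ≤ f y := by
  intro L
  induction L with
  | nil => simp
  | cons a L₀ ih =>
    intro hlen
    match hL : L₀, hlen with
    | [b], _ => exact ⟨a, b, [], by simp, by simp⟩
    | b :: c :: L₁, _ =>
      obtain ⟨x, y, L'', hperm, hmax⟩ := ih (by simp)
      by_cases hax : f a ≤ f x ∧ f a ≤ f y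
      · refine ⟨x, y, a :: L'', ?_, ?_⟩
        · calc a :: b :: c :: L₁ ~ a :: (x :: y :: L'') := hperm.cons a
            _ ~ x :: a :: y :: L'' := List.Perm.swap _ _ _
            _ ~ x :: y :: a :: L'' := (List.Perm.swap _ _ _).cons x
        · intro z hz
          rcases List.mem_cons.mp hz with rfl | hz
          · exact hax
          · exact hmax z hz
      · by_cases hxy : f x ≤ f y
        · have hxa : f x ≤ f a := by omega
          refine ⟨a, y, x :: L'', ?_, ?_⟩
          · calc a :: b :: c :: L₁ ~ a :: (x :: y :: L'') := hperm.cons a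
              _ ~ a :: y :: x :: L'' := (List.Perm.swap _ _ _).cons a
          · intro z hz
            rcases List.mem_cons.mp hz with rfl | hz
            · exact ⟨hxa, hxy⟩
            · have := hmax z hz; omega
        · have hya : f y ≤ f a := by omega
          refine ⟨a, x, y :: L'', ?_, ?_⟩
          · calc a :: b :: c :: L₁ ~ a :: (x :: y :: L'') := hperm.cons a
              _ ~ a :: y :: x :: L'' := (List.Perm.swap _ _ _).cons a
              _ ~ a :: x :: y :: L'' := (List.Perm.swap _ _ _).cons a
          · intro z hz
            rcases List.mem_cons.mp hz with rfl | hz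
            · omega
            · have := hmax z hz; omega

lemma claim [Fintype V] (t : ℕ) (ht : 1 ≤ t) :
    ∀ k, 1 ≤ k → k ≤ t → ∀ L : List (Σ p : V × V, G.Walk p.1 p.2), L.length = k →
    (∀ s ∈ L, s.2.IsPath) →
    L.Pairwise (fun s s' => List.Disjoint s.2.support s'.2.support) →
    (∀ v : V, ∃ s ∈ L, v ∈ s.2.support) →
    (∀ s ∈ L, ∀ z, z = s.1.1 ∨ z = s.1.2 →
      (Gᶜ.degree z : ℝ) ≤ (Fintype.card V : ℝ) / (2 * t) - 1) →
    ∃ Estar : Finset (Sym2 V), ↑Estar ⊆ G.edgeSet ∧ Estar.card ≤ 2 * k - 2 ∧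
      ∃ (a b : V) (R : G.Walk a b), R.IsPath ∧ (∀ v, v ∈ R.support) ∧
        (∀ e ∈ R.edges, (∃ s ∈ L, e ∈ s.2.edges) ∨ e ∈ Estar) ∧
        (∃ s ∈ L, a = s.1.1 ∨ a = s.1.2) ∧ (∃ s ∈ L, b = s.1.1 ∨ b = s.1.2) := by
  intro k
  induction k using Nat.strong_induction_on with
  | _ k ih =>
  intro hk1 hkt L hlen hpaths hpair hcover hdeg
  rcases eq_or_lt_of_le hk1 with hk1' | hk2
  · -- base case k = 1
    subst hk1'
    obtain ⟨s, rfl⟩ := List.length_eq_one_iff.mp hlen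
    refine ⟨∅, by simp, by simp, s.1.1, s.1.2, s.2, hpaths s (by simp), ?_, ?_, ?_, ?_⟩
    · intro v
      obtain ⟨s', hs', hv⟩ := hcover v
      rw [List.mem_singleton] at hs'
      exact hs' ▸ hv
    · intro e he
      exact Or.inl ⟨s, by simp, he⟩
    · exact ⟨s, by simp, Or.inl rfl⟩
    · exact ⟨s, by simp, Or.inr rfl⟩
  · -- inductive step, k ≥ 2
    set f : (Σ p : V × V, G.Walk p.1 p.2) → ℕ := fun s => s.2.support.length with hf
    obtain ⟨x, y, L', hperm, hmax⟩ := two_largest f L (by omega)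
    have hxL : x ∈ L := hperm.mem_iff.mpr (by simp)
    have hyL : y ∈ L := hperm.mem_iff.mpr (by simp)
    have hL'L : ∀ s ∈ L', s ∈ L := fun s hs => hperm.mem_iff.mpr (by simp [hs])
    have hpair2 := (hperm.pairwise_iff (fun {_ _} h => List.Disjoint.symm h)).mp hpair
    rw [List.pairwise_cons] at hpair2
    have hxy := hpair2.1 y (List.mem_cons_self)
    have hpair3 := List.pairwise_cons.mp hpair2.2
    -- total size of supports is the number of vertices
    have hN : (L.map f).sum = Fintype.card V := by
      have hFnd : ((L.map (fun s => s.2.support)).flatten).Nodup := by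
        rw [List.nodup_flatten]
        constructor
        · intro l hl
          obtain ⟨s, hs, rfl⟩ := List.mem_map.mp hl
          exact (hpaths s hs).support_nodup
        · rw [List.pairwise_map]
          exact hpair
      have hFall : ∀ v, v ∈ (L.map (fun s => s.2.support)).flatten := by
        intro v
        obtain ⟨s, hs, hv⟩ := hcover v
        exact List.mem_flatten.mpr ⟨s.2.support, List.mem_map_of_mem hs, hv⟩
      have huniv : ((L.map (fun s => s.2.support)).flatten).toFinset = Finset.univ :=
        Finset.eq_univ_iff_forall.mpr (fun v => List.mem_toFinset.mpr (hFall v))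
      have h := List.toFinset_card_of_nodup hFnd
      rw [huniv, Finset.card_univ] at h
      rw [h, List.length_flatten, List.map_map]
      rfl
    have hsum' : (L.map f).sum = f x + f y + (L'.map f).sum := by
      rw [(hperm.map f).sum_eq]
      simp [add_assoc]
    have hlen' : L'.length = k - 2 := by
      have := hperm.length_eq
      simp only [List.length_cons] at this
      omega
    have hL'bound : 2 * (L'.map f).sum ≤ (k - 2) * (f x + f y) := by
      have h1 : (L'.map (fun z => 2 * f z)).sum ≤ (L'.map (fun z => 2 * f z)).length • (f x + f y) := by
        apply List.sum_le_card_nsmul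
        intro m hm
        obtain ⟨z, hz, rfl⟩ := List.mem_map.mp hm
        have := hmax z hz
        omega
      have h2 : (L'.map (fun z => 2 * f z)).sum = 2 * (L'.map f).sum := by
        rw [show (fun z => 2 * f z) = (fun i => 2 * i) ∘ f from rfl, ← List.map_map]
        rw [← List.map_id (L'.map f), ← List.sum_map_mul_left (L'.map f) id 2]
        simp
      rw [h2, smul_eq_mul, List.length_map, hlen'] at h1
      exact h1
    have hkey : 2 * Fintype.card V ≤ k * (f x + f y) := by
      have h2 : 2 + (k - 2) = k := by omega
      have hexp : k * (f x + f y) = 2 * (f x + f y) + (k - 2) * (f x + f y) := by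
        rw [← h2, Nat.add_mul, h2]
      set A := (k - 2) * (f x + f y) with hA
      set B := k * (f x + f y) with hB
      omega
    -- degree sum bound (real arithmetic)
    have hdegsum : Gᶜ.degree x.1.1 + Gᶜ.degree x.1.2 + Gᶜ.degree y.1.1 + Gᶜ.degree y.1.2 + 2
        < f x + f y := by
      have hx1 := hdeg x hxL x.1.1 (Or.inl rfl)
      have hx2 := hdeg x hxL x.1.2 (Or.inr rfl)
      have hy1 := hdeg y hyL y.1.1 (Or.inl rfl)
      have hy2 := hdeg y hyL y.1.2 (Or.inr rfl)
      have hT : (0:ℝ) < (t:ℝ) := by exact_mod_cast ht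
      have hK : (0:ℝ) < (k:ℝ) := by exact_mod_cast hk1
      have hKT : (k:ℝ) ≤ (t:ℝ) := by exact_mod_cast hkt
      have hn : (0:ℝ) ≤ (Fintype.card V : ℝ) := by positivity
      have hkeyR : 2 * (Fintype.card V : ℝ) ≤ (k:ℝ) * ((f x : ℝ) + (f y : ℝ)) := by
        exact_mod_cast hkey
      have h1 : 2 * (Fintype.card V : ℝ) / (k:ℝ) ≤ (f x : ℝ) + (f y : ℝ) := by
        rw [div_le_iff₀ hK]
        linarith [hkeyR]
      have h2 : 2 * (Fintype.card V : ℝ) / (t:ℝ) ≤ 2 * (Fintype.card V : ℝ) / (k:ℝ) :=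
        div_le_div_of_nonneg_left (by linarith) hK hKT
      have h3 : 4 * ((Fintype.card V : ℝ) / (2 * t)) = 2 * (Fintype.card V : ℝ) / (t:ℝ) := by
        field_simp
        ring
      have : (Gᶜ.degree x.1.1 : ℝ) + Gᶜ.degree x.1.2 + Gᶜ.degree y.1.1 + Gᶜ.degree y.1.2 + 2
          < (f x : ℝ) + (f y : ℝ) := by
        linarith
      exact_mod_cast this
    have hcount : Gᶜ.degree x.1.1 + Gᶜ.degree x.1.2 + Gᶜ.degree y.1.1 + Gᶜ.degree y.1.2
        < x.2.length + y.2.length := by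
      have hfx : f x = x.2.length + 1 := by simp only [hf]; exact x.2.length_support
      have hfy : f y = y.2.length + 1 := by simp only [hf]; exact y.2.length_support
      omega
    obtain ⟨x', y', R, hRpath, hRsupp, hRends, e1, e2, he1, he2, hRedges⟩ :=
      lemC x.2 y.2 (hpaths x hxL) (hpaths y hyL) hxy hcount
    set z : (Σ p : V × V, G.Walk p.1 p.2) := ⟨(x', y'), R⟩ with hz
    -- apply induction hypothesis to z :: L'
    have hM : ∀ s ∈ z :: L', s ∈ L ∨ s = z := by
      intro s hs
      rcases List.mem_cons.mp hs with rfl | hs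
      · exact Or.inr rfl
      · exact Or.inl (hL'L s hs)
    obtain ⟨Estar', hsub', hcard', a, b, R'', hR''path, hR''supp, hR''edges, hR''a, hR''b⟩ :=
      ih (k-1) (by omega) (by omega) (by omega) (z :: L') (by simp [hlen']; omega)
        (by
          intro s hs
          rcases List.mem_cons.mp hs with rfl | hs
          · exact hRpath
          · exact hpaths s (hL'L s hs))
        (by
          rw [List.pairwise_cons]
          refine ⟨?_, hpair3.2⟩
          intro s hs v hv hv'
          rcases (hRsupp v).mp hv with h | h
          · exact hpair2.1 s (List.mem_cons_of_mem _ hs) h hv'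
          · exact hpair3.1 s hs h hv')
        (by
          intro v
          obtain ⟨s, hs, hv⟩ := hcover v
          rcases List.mem_cons.mp (hperm.mem_iff.mp hs) with rfl | hs'
          · exact ⟨z, List.mem_cons_self, (hRsupp v).mpr (Or.inl hv)⟩
          rcases List.mem_cons.mp hs' with rfl | hs''
          · exact ⟨z, List.mem_cons_self, (hRsupp v).mpr (Or.inr hv)⟩
          · exact ⟨s, List.mem_cons_of_mem _ hs'', hv⟩)
        (by
          intro s hs ζ hζ
          rcases List.mem_cons.mp hs with rfl | hs
          · rcases hRends with ⟨hx', hy'⟩ | ⟨hx', hy'⟩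
            · rcases hζ with rfl | rfl
              · exact hdeg x hxL _ (Or.inl hx')
              · exact hdeg x hxL _ (Or.inr hy')
            · rcases hζ with rfl | rfl
              · exact hdeg y hyL _ (Or.inl hx')
              · exact hdeg y hyL _ (Or.inr hy')
          · exact hdeg s (hL'L s hs) ζ hζ)
    refine ⟨Estar' ∪ {e1, e2}, ?_, ?_, a, b, R'', hR''path, hR''supp, ?_, ?_, ?_⟩
    · intro e he
      rw [Finset.coe_union, Set.mem_union] at he
      rcases he with he | he
      · exact hsub' he
      · simp only [Finset.coe_insert, Set.mem_insert_iff, Finset.coe_singleton,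
          Set.mem_singleton_iff] at he
        rcases he with rfl | rfl
        · exact he1
        · exact he2
    · calc (Estar' ∪ {e1, e2}).card ≤ Estar'.card + ({e1, e2} : Finset (Sym2 V)).card :=
          Finset.card_union_le _ _
        _ ≤ (2 * (k-1) - 2) + 2 := by
          have : ({e1, e2} : Finset (Sym2 V)).card ≤ 2 := Finset.card_insert_le _ _ |>.trans (by simp)
          omega
        _ ≤ 2 * k - 2 := by omega
    · intro e he
      rcases hR''edges e he with ⟨s, hs, hes⟩ | hes
      · rcases List.mem_cons.mp hs with rfl | hs
        · rcases hRedges e hes with h | h | rfl | rfl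
          · exact Or.inl ⟨x, hxL, h⟩
          · exact Or.inl ⟨y, hyL, h⟩
          · exact Or.inr (Finset.mem_union_right _ (by simp))
          · exact Or.inr (Finset.mem_union_right _ (by simp))
        · exact Or.inl ⟨s, hL'L s hs, hes⟩
      · exact Or.inr (Finset.mem_union_left _ hes)
    · obtain ⟨s, hs, hends⟩ := hR''a
      rcases List.mem_cons.mp hs with rfl | hs
      · rcases hRends with ⟨hx', hy'⟩ | ⟨hx', hy'⟩
        · rcases hends with rfl | rfl
          · exact ⟨x, hxL, Or.inl hx'⟩
          · exact ⟨x, hxL, Or.inr hy'⟩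
        · rcases hends with rfl | rfl
          · exact ⟨y, hyL, Or.inl hx'⟩
          · exact ⟨y, hyL, Or.inr hy'⟩
      · exact ⟨s, hL'L s hs, hends⟩
    · obtain ⟨s, hs, hends⟩ := hR''b
      rcases List.mem_cons.mp hs with rfl | hs
      · rcases hRends with ⟨hx', hy'⟩ | ⟨hx', hy'⟩
        · rcases hends with rfl | rfl
          · exact ⟨x, hxL, Or.inl hx'⟩
          · exact ⟨x, hxL, Or.inr hy'⟩
        · rcases hends with rfl | rfl
          · exact ⟨y, hyL, Or.inl hx'⟩
          · exact ⟨y, hyL, Or.inr hy'⟩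
      · exact ⟨s, hL'L s hs, hends⟩

end helpers
/-- Let `G` be a finite simple graph on `n` vertices and `P 0, …, P (t-1)` pairwise
vertex-disjoint paths covering `V(G)`, whose endpoints all satisfy
`d_{Ḡ}(z) ≤ n/(2t) - 1`. Then there is a set `E*` of at most `2t - 2` edges of `G` such
that `⋃ᵢ E(Pᵢ) ∪ E*` contains the edge set of a Hamilton path of `G` whose endpoints
belong to `⋃ᵢ End(Pᵢ)`. -/
theorem exists_hamiltonian_path_of_path_cover
    {V : Type*} [Fintype V] [DecidableEq V]
    (G : SimpleGraph V) [DecidableRel G.Adj]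
    (t : ℕ) (ht : 1 ≤ t) (u w : Fin t → V)
    (P : ∀ i : Fin t, G.Walk (u i) (w i))
    (hP : ∀ i, (P i).IsPath)
    (hdisj : ∀ i j, i ≠ j → List.Disjoint (P i).support (P j).support)
    (hcover : ∀ x : V, ∃ i, x ∈ (P i).support)
    (hdeg : ∀ (i : Fin t), ∀ z ∈ ({u i, w i} : Set V),
      (Gᶜ.degree z : ℝ) ≤ (Fintype.card V : ℝ) / (2 * t) - 1) :
    ∃ Estar : Finset (Sym2 V), ↑Estar ⊆ G.edgeSet ∧ Estar.card ≤ 2 * t - 2 ∧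
      ∃ (a b : V) (Q : G.Walk a b), Q.IsHamiltonian ∧
        (∀ e ∈ Q.edges, (∃ i, e ∈ (P i).edges) ∨ e ∈ Estar) ∧
        (∃ i, a = u i ∨ a = w i) ∧ (∃ i, b = u i ∨ b = w i) := by
  classical
  set L : List (Σ p : V × V, G.Walk p.1 p.2) :=
    (List.finRange t).map (fun i => ⟨(u i, w i), P i⟩) with hL
  have hmem : ∀ s ∈ L, ∃ i : Fin t, s = ⟨(u i, w i), P i⟩ := by
    intro s hs
    rw [hL, List.mem_map] at hs
    obtain ⟨i, _, rfl⟩ := hs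
    exact ⟨i, rfl⟩
  obtain ⟨Estar, hsub, hcard, a, b, R, hRpath, hRsupp, hRedges, hRa, hRb⟩ :=
    claim t ht t ht le_rfl L (by simp [hL])
      (by
        intro s hs
        obtain ⟨i, rfl⟩ := hmem s hs
        exact hP i)
      (by
        rw [hL, List.pairwise_map]
        exact (List.nodup_finRange t).imp (fun hij => hdisj _ _ hij))
      (by
        intro v
        obtain ⟨i, hi⟩ := hcover v
        exact ⟨⟨(u i, w i), P i⟩, by rw [hL]; exact List.mem_map_of_mem (List.mem_finRange i), hi⟩)
      (by
        intro s hs z hz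
        obtain ⟨i, rfl⟩ := hmem s hs
        exact hdeg i z (by rcases hz with rfl | rfl
                           · exact Set.mem_insert _ _
                           · exact Set.mem_insert_of_mem _ rfl))
  refine ⟨Estar, hsub, hcard, a, b, R, (hRpath.isHamiltonian_iff).mpr hRsupp, ?_, ?_, ?_⟩
  · intro e he
    rcases hRedges e he with ⟨s, hs, hes⟩ | h
    · obtain ⟨i, rfl⟩ := hmem s hs
      exact Or.inl ⟨i, hes⟩
    · exact Or.inr h
  · obtain ⟨s, hs, h⟩ := hRa
    obtain ⟨i, rfl⟩ := hmem s hs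
    exact ⟨i, h⟩
  · obtain ⟨s, hs, h⟩ := hRb
    obtain ⟨i, rfl⟩ := hmem s hs
    exact ⟨i, h⟩
end

section
/- Let G be a finite simple graph on n ≥ 3 vertices containing a Hamilton path P with endpoints x and y. If d_G(x) ≥ n/2 and d_G(y) ≥ n/2, then there exist two edges f1, f2 ∈ E(G) such that E(P) ∪ {f1, f2} contains the edge set of a Hamilton cycle of G. -/
open SimpleGraph Walk Finset

private lemma getVert_injOn' {V : Type*} {G : SimpleGraph V} {u v : V} {p : G.Walk u v}
    (hp : p.IsPath) : ∀ {i j : ℕ}, i ≤ p.length → j ≤ p.length →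
      p.getVert i = p.getVert j → i = j := by
  induction p with
  | nil =>
    intro i j hi hj _
    simp only [SimpleGraph.Walk.length_nil, Nat.le_zero] at hi hj
    omega
  | cons h q ih =>
    rw [SimpleGraph.Walk.cons_isPath_iff] at hp
    intro i j hi hj hij
    match i, j with
    | 0, 0 => rfl
    | 0, (j+1) =>
      exfalso
      apply hp.2
      rw [SimpleGraph.Walk.mem_support_iff_exists_getVert]
      refine ⟨j, ?_, ?_⟩
      · simpa [SimpleGraph.Walk.getVert_cons_succ] using hij.symm
      · simpa using hj
    | (i+1), 0 =>
      exfalso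
      apply hp.2
      rw [SimpleGraph.Walk.mem_support_iff_exists_getVert]
      refine ⟨i, ?_, ?_⟩
      · simpa [SimpleGraph.Walk.getVert_cons_succ] using hij
      · simpa using hi
    | (i+1), (j+1) =>
      have := ih hp.1 (by simpa using hi) (by simpa using hj)
        (by simpa [SimpleGraph.Walk.getVert_cons_succ] using hij)
      omega

/-- If a finite simple graph `G` on `n ≥ 3` vertices contains a Hamilton path with
endpoints `x` and `y` of degrees `d_G(x) ≥ n/2` and `d_G(y) ≥ n/2`, then there are two
edges `f₁, f₂ ∈ E(G)` such that `E(P) ∪ {f₁, f₂}` contains the edge set of a Hamilton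
cycle of `G`. -/
theorem hamiltonian_cycle_of_hamiltonian_path
    {V : Type*} [Fintype V] [DecidableEq V]
    (G : SimpleGraph V) [DecidableRel G.Adj]
    (hn : 3 ≤ Fintype.card V)
    {x y : V} (P : G.Walk x y) (hP : P.IsHamiltonian)
    (hx : (Fintype.card V : ℝ) / 2 ≤ (G.degree x : ℝ))
    (hy : (Fintype.card V : ℝ) / 2 ≤ (G.degree y : ℝ)) :
    ∃ f₁ ∈ G.edgeSet, ∃ f₂ ∈ G.edgeSet,
      ∃ (a : V) (C : G.Walk a a), C.IsHamiltonianCycle ∧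
        ∀ e ∈ C.edges, e ∈ P.edges ∨ e = f₁ ∨ e = f₂ := by
  have hpath : P.IsPath := hP.isPath
  have hlen : P.length = Fintype.card V - 1 := hP.length_eq
  have hlen2 : 2 ≤ P.length := by omega
  have hxy : x ≠ y := by
    intro h
    subst h
    have := (SimpleGraph.Walk.isPath_iff_eq_nil (p := P)).mp hpath
    subst this
    simp at hlen2
  by_cases hadj : G.Adj x y
  · -- easy case: close the path with the edge x-y
    refine ⟨s(x, y), hadj, s(x, y), hadj, y, Walk.cons hadj.symm P, ?_, ?_⟩
    · constructor
      · refine (SimpleGraph.Walk.cons_isCycle_iff _ _).mpr ⟨hpath, ?_⟩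
        -- s(y, x) ∉ P.edges
        intro hmem
        cases P with
        | nil => simp at hlen2
        | cons h q =>
          rw [SimpleGraph.Walk.edges_cons, List.mem_cons] at hmem
          rw [SimpleGraph.Walk.cons_isPath_iff] at hpath
          rcases hmem with hmem | hmem
          · rw [Sym2.eq_iff] at hmem
            rcases hmem with ⟨h1, h2⟩ | ⟨h1, h2⟩
            · exact hxy h1.symm
            · subst h1
              have := (SimpleGraph.Walk.isPath_iff_eq_nil (p := q)).mp hpath.1
              subst this
              simp at hlen2
          · exact hpath.2 (q.snd_mem_support_of_mem_edges hmem)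
      · -- tail Hamiltonian
        intro a
        simp only [SimpleGraph.Walk.tail_cons, SimpleGraph.Walk.support_copy]
        convert hP a using 2; exact SimpleGraph.Walk.support_copy _ _ _
    · intro e he
      rw [SimpleGraph.Walk.edges_cons, List.mem_cons] at he
      rcases he with he | he
      · right; left; rw [he, Sym2.eq_swap]
      · left; exact he
  · -- hard case: rotation
    have hdeg : Fintype.card V ≤ G.degree x + G.degree y := by
      have h2 : (Fintype.card V : ℝ) ≤ (G.degree x : ℝ) + (G.degree y : ℝ) := by linarith
      exact_mod_cast h2
    set L := P.length with hLdef
    set A : Finset ℕ := (Finset.range L).filter (fun i => G.Adj x (P.getVert (i+1))) with hA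
    set B : Finset ℕ := (Finset.range L).filter (fun i => G.Adj y (P.getVert i)) with hB
    have hAcard : A.card = G.degree x := by
      rw [← SimpleGraph.card_neighborFinset_eq_degree]
      apply Finset.card_bij (fun i _ => P.getVert (i+1))
      · intro i hi
        rw [SimpleGraph.mem_neighborFinset]
        exact (Finset.mem_filter.mp hi).2
      · intro i hi j hj h
        have hi' := Finset.mem_range.mp (Finset.mem_filter.mp hi).1
        have hj' := Finset.mem_range.mp (Finset.mem_filter.mp hj).1
        have := getVert_injOn' hpath (by omega) (by omega) h
        omega
      · intro w hw
        rw [SimpleGraph.mem_neighborFinset] at hw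
        obtain ⟨k, hkw, hk⟩ := SimpleGraph.Walk.mem_support_iff_exists_getVert.mp
          (hP.mem_support w)
        have hk0 : k ≠ 0 := by
          intro h; subst h
          rw [SimpleGraph.Walk.getVert_zero] at hkw
          exact hw.ne' hkw.symm
        refine ⟨k - 1, Finset.mem_filter.mpr ⟨Finset.mem_range.mpr (by omega), ?_⟩, ?_⟩
        · rw [show k - 1 + 1 = k by omega, hkw]; exact hw
        · rw [show k - 1 + 1 = k by omega, hkw]
    have hBcard : B.card = G.degree y := by
      rw [← SimpleGraph.card_neighborFinset_eq_degree]
      apply Finset.card_bij (fun i _ => P.getVert i)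
      · intro i hi
        rw [SimpleGraph.mem_neighborFinset]
        exact (Finset.mem_filter.mp hi).2
      · intro i hi j hj h
        have hi' := Finset.mem_range.mp (Finset.mem_filter.mp hi).1
        have hj' := Finset.mem_range.mp (Finset.mem_filter.mp hj).1
        exact getVert_injOn' hpath (by omega) (by omega) h
      · intro w hw
        rw [SimpleGraph.mem_neighborFinset] at hw
        obtain ⟨k, hkw, hk⟩ := SimpleGraph.Walk.mem_support_iff_exists_getVert.mp
          (hP.mem_support w)
        have hkL : k ≠ L := by
          intro h; subst h
          rw [SimpleGraph.Walk.getVert_length] at hkw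
          exact hw.ne' hkw.symm
        exact ⟨k, Finset.mem_filter.mpr ⟨Finset.mem_range.mpr (by omega), hkw ▸ hw⟩, hkw⟩
    have hunion : (A ∪ B) ⊆ Finset.range L := by
      intro i hi
      rcases Finset.mem_union.mp hi with h | h
      · exact (Finset.mem_filter.mp h).1
      · exact (Finset.mem_filter.mp h).1
    have hinter : 0 < (A ∩ B).card := by
      have h1 := Finset.card_union_add_card_inter A B
      have h2 : (A ∪ B).card ≤ L := by
        calc (A ∪ B).card ≤ (Finset.range L).card := Finset.card_le_card hunion
        _ = L := Finset.card_range L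
      omega
    obtain ⟨i, hi⟩ := Finset.card_pos.mp hinter
    obtain ⟨hiA, hiB⟩ := Finset.mem_inter.mp hi
    have hiL : i < L := Finset.mem_range.mp (Finset.mem_filter.mp hiA).1
    have hxAdj : G.Adj x (P.getVert (i+1)) := (Finset.mem_filter.mp hiA).2
    have hyAdj : G.Adj y (P.getVert i) := (Finset.mem_filter.mp hiB).2
    have hi0 : i ≠ 0 := by
      intro h; subst h
      rw [SimpleGraph.Walk.getVert_zero] at hyAdj
      exact hadj hyAdj.symm
    set u := P.getVert i with hu_def
    have hu : u ∈ P.support :=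
      SimpleGraph.Walk.mem_support_iff_exists_getVert.mpr ⟨i, rfl, by omega⟩
    set T := P.takeUntil u hu with hT
    set D := P.dropUntil u hu with hDdef
    have hTD : T.append D = P := P.take_spec hu
    have hTlen : T.length = i := by
      have key : (T.append D).getVert T.length = u := by
        rw [SimpleGraph.Walk.getVert_append]
        simp
      rw [hTD] at key
      exact getVert_injOn' hpath (le_trans (P.length_takeUntil_le hu) le_rfl) (by omega) key
    have hDnil : ¬ D.Nil := by
      intro h
      have h0 : D.length = 0 := SimpleGraph.Walk.nil_iff_length_eq.mp h
      have : u = y := by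
        have := D.getVert_length
        rw [h0] at this
        rw [← this, SimpleGraph.Walk.getVert_zero]
      have : i = L := getVert_injOn' hpath (by omega) le_rfl
        (by rw [← hu_def, this, SimpleGraph.Walk.getVert_length])
      omega
    obtain ⟨b, hub, D', hD⟩ := SimpleGraph.Walk.not_nil_iff.mp hDnil
    have hb : b = P.getVert (i+1) := by
      have h1 : D.getVert 1 = b := by rw [hD]; exact (D'.getVert_cons_succ hub (n := 0)).trans D'.getVert_zero
      have h2 : (T.append D).getVert (i+1) = D.getVert 1 := by
        rw [SimpleGraph.Walk.getVert_append, if_neg (by omega)]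
        congr 1
        omega
      rw [hTD] at h2
      rw [h2, h1]
    have hxb : G.Adj x b := hb ▸ hxAdj
    -- support bookkeeping
    have hsupp : P.support = T.support ++ D'.support := by
      rw [← hTD, SimpleGraph.Walk.support_append, hD, SimpleGraph.Walk.support_cons,
        List.tail_cons]
    have hcount : ∀ a, T.support.count a + D'.support.count a = 1 := by
      intro a
      have := hP a
      rwa [hsupp, List.count_append] at this
    set R : G.Walk b x := D'.append (Walk.cons hyAdj T.reverse) with hR
    have hRsupp : R.support = D'.support ++ T.reverse.support := by
      rw [hR, SimpleGraph.Walk.support_append, SimpleGraph.Walk.support_cons, List.tail_cons]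
    have hRcount : ∀ a, R.support.count a = 1 := by
      intro a
      rw [hRsupp, List.count_append, SimpleGraph.Walk.support_reverse, List.count_reverse]
      have := hcount a
      omega
    have hRpath : R.IsPath :=
      SimpleGraph.Walk.IsPath.mk' (List.nodup_iff_count_le_one.mpr fun a => (hRcount a).le)
    have hxD' : x ∉ D'.support := by
      intro hmem
      have h1 : 0 < T.support.count x := List.count_pos_iff.mpr T.start_mem_support
      have h2 : 0 < D'.support.count x := List.count_pos_iff.mpr hmem
      have := hcount x
      omega
    have hbT : b ∉ T.support := by
      intro hmem
      have h1 : 0 < T.support.count b := List.count_pos_iff.mpr hmem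
      have h2 : 0 < D'.support.count b := List.count_pos_iff.mpr D'.start_mem_support
      have := hcount b
      omega
    have hxu : x ≠ u := by
      intro h
      have : (0 : ℕ) = i := getVert_injOn' hpath (by omega) (by omega)
        (by rw [SimpleGraph.Walk.getVert_zero, ← hu_def]; exact h)
      omega
    have hnotmem : s(x, b) ∉ R.edges := by
      intro hmem
      rw [hR, SimpleGraph.Walk.edges_append, SimpleGraph.Walk.edges_cons] at hmem
      rcases List.mem_append.mp hmem with h | h
      · exact hxD' (D'.fst_mem_support_of_mem_edges h)
      · rcases List.mem_cons.mp h with h | h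
        · rw [Sym2.eq_iff] at h
          rcases h with ⟨h1, _⟩ | ⟨h1, _⟩
          · exact hxy h1
          · exact hxu h1
        · rw [SimpleGraph.Walk.edges_reverse, List.mem_reverse] at h
          exact hbT (T.snd_mem_support_of_mem_edges h)
    refine ⟨s(x, b), hxb, s(y, u), hyAdj, x, Walk.cons hxb R, ?_, ?_⟩
    · constructor
      · exact (SimpleGraph.Walk.cons_isCycle_iff _ _).mpr ⟨hRpath, hnotmem⟩
      · intro a
        simp only [SimpleGraph.Walk.tail_cons, SimpleGraph.Walk.support_copy]
        convert hRcount a using 2; exact SimpleGraph.Walk.support_copy _ _ _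
    · intro e he
      rw [SimpleGraph.Walk.edges_cons, List.mem_cons] at he
      rcases he with he | he
      · right; left; exact he
      · rw [hR, SimpleGraph.Walk.edges_append, List.mem_append] at he
        rcases he with he | he
        · left
          rw [← hTD, SimpleGraph.Walk.edges_append, hD, SimpleGraph.Walk.edges_cons]
          simp [he]
        · rw [SimpleGraph.Walk.edges_cons, List.mem_cons] at he
          rcases he with he | he
          · right; right; exact he
          · left
            rw [SimpleGraph.Walk.edges_reverse, List.mem_reverse] at he
            rw [← hTD, SimpleGraph.Walk.edges_append]
            simp [he]
end

section
/- Suppose |𝒫| ≥ 2, every vertex of End(𝒫) is incident with at least one good edge, and D(e) ≤ 1 holds for every good edge e. Then the number of bad edges is at most 1. -/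
/-- The set of endpoints of a family of paths whose endpoints are given by `u i`, `v i`. -/
def endpointSet {V ι : Type*} (u v : ι → V) : Set V := Set.range u ∪ Set.range v

/-- `e` is an edge of `K_n` joining an endpoint of one path of the family to an endpoint
of a different path of the family. -/
def IsCrossEdge {V ι : Type*} (u v : ι → V) (e : Sym2 V) : Prop :=
  ∃ (i j : ι) (x y : V), i ≠ j ∧ (x = u i ∨ x = v i) ∧ (y = u j ∨ y = v j) ∧ e = s(x, y)

/-- A cross edge is *bad* if it belongs to the graph `B`. -/
def IsBadEdge {V ι : Type*} (B : SimpleGraph V) (u v : ι → V) (e : Sym2 V) : Prop :=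
  IsCrossEdge u v e ∧ e ∈ B.edgeSet

/-- A cross edge is *good* if it does not belong to the graph `B`. -/
def IsGoodEdge {V ι : Type*} (B : SimpleGraph V) (u v : ι → V) (e : Sym2 V) : Prop :=
  IsCrossEdge u v e ∧ e ∉ B.edgeSet

/-- `Dval B u v e` is the number of bad edges sharing a vertex with `e`. -/
noncomputable def Dval {V ι : Type*} (B : SimpleGraph V) (u v : ι → V) (e : Sym2 V) : ℕ :=
  Set.ncard {f : Sym2 V | IsBadEdge B u v f ∧ ∃ z, z ∈ e ∧ z ∈ f}

/-- If the family `𝒫` consists of at least 2 pairwise vertex-disjoint paths of `K_n`,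
each with at least one edge, every vertex of `End(𝒫)` is incident with at least one good
edge, and `D(e) ≤ 1` for every good edge `e`, then there is at most one bad edge. -/
theorem bad_edges_le_one
    {V : Type*} [Fintype V] [DecidableEq V]
    (B : SimpleGraph V) (t : ℕ) (ht : 2 ≤ t) (u v : Fin t → V)
    (P : ∀ i : Fin t, (⊤ : SimpleGraph V).Walk (u i) (v i))
    (hP : ∀ i, (P i).IsPath) (hne : ∀ i, u i ≠ v i)
    (hdisj : ∀ i j, i ≠ j → List.Disjoint (P i).support (P j).support)
    (hgood : ∀ x ∈ endpointSet u v, ∃ e, IsGoodEdge B u v e ∧ x ∈ e)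
    (hD : ∀ e, IsGoodEdge B u v e → Dval B u v e ≤ 1) :
    Set.ncard {e : Sym2 V | IsBadEdge B u v e} ≤ 1 := by
  classical
  -- key counting fact: a good edge cannot meet two distinct bad edges
  have key : ∀ e, IsGoodEdge B u v e → ∀ f₁ f₂, IsBadEdge B u v f₁ → IsBadEdge B u v f₂ →
      f₁ ≠ f₂ → (∃ z, z ∈ e ∧ z ∈ f₁) → (∃ z, z ∈ e ∧ z ∈ f₂) → False := by
    intro e he f₁ f₂ hb1 hb2 h12 hz1 hz2
    have hDe := hD e he
    have h2 : 2 ≤ Dval B u v e := by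
      have hsub : ({f₁, f₂} : Set (Sym2 V)) ⊆
          {f : Sym2 V | IsBadEdge B u v f ∧ ∃ z, z ∈ e ∧ z ∈ f} := by
        intro f hf
        simp only [Set.mem_insert_iff, Set.mem_singleton_iff] at hf
        rcases hf with rfl | rfl
        · exact ⟨hb1, hz1⟩
        · exact ⟨hb2, hz2⟩
      calc (2 : ℕ) = ({f₁, f₂} : Set (Sym2 V)).ncard := (Set.ncard_pair h12).symm
        _ ≤ _ := Set.ncard_le_ncard hsub (Set.toFinite _)
    omega
  -- endpoints have good edges
  have endpt : ∀ (i : Fin t) (x : V), (x = u i ∨ x = v i) →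
      ∃ e, IsGoodEdge B u v e ∧ x ∈ e := by
    intro i x hx
    refine hgood x ?_
    rcases hx with rfl | rfl
    · exact Or.inl ⟨i, rfl⟩
    · exact Or.inr ⟨i, rfl⟩
  rw [Set.ncard_le_one (Set.toFinite _)]
  intro f₁ hf₁ f₂ hf₂
  by_contra hne12
  obtain ⟨hc1, hB1⟩ := hf₁
  obtain ⟨hc2, hB2⟩ := hf₂
  obtain ⟨i, j, a, b, hij, ha, hb, rfl⟩ := hc1
  obtain ⟨k, l, c, d, hkl, hc, hd, rfl⟩ := hc2
  by_cases hsh : ∃ z, z ∈ s(a, b) ∧ z ∈ s(c, d)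
  · -- shared vertex: get a good edge there
    obtain ⟨z, hz1, hz2⟩ := hsh
    have hzend : ∃ e, IsGoodEdge B u v e ∧ z ∈ e := by
      rcases Sym2.mem_iff.mp hz1 with h | h <;> subst h
      · exact endpt i z ha
      · exact endpt j z hb
    obtain ⟨e, he, hze⟩ := hzend
    exact key e he s(a, b) s(c, d) ⟨⟨i, j, a, b, hij, ha, hb, rfl⟩, hB1⟩
      ⟨⟨k, l, c, d, hkl, hc, hd, rfl⟩, hB2⟩ hne12 ⟨z, hze, hz1⟩ ⟨z, hze, hz2⟩
  · push_neg at hsh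
    -- pick an endpoint c' of f₂ on a path different from a's path i
    obtain ⟨m, c', hc'm, hmi, hc'f2⟩ :
        ∃ (m : Fin t) (c' : V), (c' = u m ∨ c' = v m) ∧ m ≠ i ∧ c' ∈ s(c, d) := by
      by_cases hk : k = i
      · exact ⟨l, d, hd, fun h => hkl (hk.trans h.symm), Sym2.mem_mk_right c d⟩
      · exact ⟨k, c, hc, hk, Sym2.mem_mk_left c d⟩
    have hac' : a ≠ c' := fun h => hsh a (Sym2.mem_mk_left a b) (h ▸ hc'f2)
    have hcross : IsCrossEdge u v s(a, c') := ⟨i, m, a, c', hmi.symm, ha, hc'm, rfl⟩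
    by_cases hgB : s(a, c') ∈ B.edgeSet
    · -- s(a,c') is a second bad edge through a
      have hgne : s(a, c') ≠ s(a, b) := by
        intro h
        rcases Sym2.eq_iff.mp h with ⟨_, rfl⟩ | ⟨rfl, rfl⟩
        · exact hsh c' (Sym2.mem_mk_right a c') hc'f2
        · exact hac' rfl
      obtain ⟨e, he, hae⟩ := endpt i a ha
      exact key e he s(a, b) s(a, c') ⟨⟨i, j, a, b, hij, ha, hb, rfl⟩, hB1⟩
        ⟨hcross, hgB⟩ hgne.symm ⟨a, hae, Sym2.mem_mk_left a b⟩
        ⟨a, hae, Sym2.mem_mk_left a c'⟩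
    · -- s(a,c') is good and meets both bad edges
      exact key s(a, c') ⟨hcross, hgB⟩ s(a, b) s(c, d)
        ⟨⟨i, j, a, b, hij, ha, hb, rfl⟩, hB1⟩ ⟨⟨k, l, c, d, hkl, hc, hd, rfl⟩, hB2⟩
        hne12 ⟨a, Sym2.mem_mk_left a c', Sym2.mem_mk_left a b⟩
        ⟨c', Sym2.mem_mk_right a c', hc'f2⟩
end

section
/- Suppose |𝒫| ≥ 4, every vertex of End(𝒫) is incident with at least one good edge, and D(e) ≤ 2 holds for every good edge e. Then the number of bad edges is at most |𝒫|. -/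
/-- Structure of a bad edge seen from one of its vertices. -/
lemma badEdge_struct {V ι : Type*} {B : SimpleGraph V} {u v : ι → V} {e : Sym2 V}
    (he : IsBadEdge B u v e) {z : V} (hz : z ∈ e) :
    ∃ (i j : ι) (y : V), i ≠ j ∧ (z = u i ∨ z = v i) ∧ (y = u j ∨ y = v j) ∧ e = s(z, y) := by
  obtain ⟨⟨i, j, x, y, hij, hx, hy, rfl⟩, _⟩ := he
  rcases Sym2.mem_iff.mp hz with rfl | rfl
  · exact ⟨i, j, y, hij, hx, hy, rfl⟩
  · exact ⟨j, i, x, hij.symm, hy, hx, Sym2.eq_swap⟩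

/-- Three pairwise distinct elements of a set of `ncard ≤ 2` give a contradiction. -/
lemma three_distinct_ncard_le_two {α : Type*} [Finite α] {S : Set α} (hS : S.ncard ≤ 2)
    {g₁ g₂ g₃ : α} (h1 : g₁ ∈ S) (h2 : g₂ ∈ S) (h3 : g₃ ∈ S)
    (h12 : g₁ ≠ g₂) (h13 : g₁ ≠ g₃) (h23 : g₂ ≠ g₃) : False := by
  have hsub : ({g₁, g₂, g₃} : Set α) ⊆ S := by
    intro g hg
    simp only [Set.mem_insert_iff, Set.mem_singleton_iff] at hg
    rcases hg with rfl | rfl | rfl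
    exacts [h1, h2, h3]
  have h3card : ({g₁, g₂, g₃} : Set α).ncard = 3 :=
    Set.ncard_eq_three.mpr ⟨g₁, g₂, g₃, h12, h13, h23, rfl⟩
  have := (Set.ncard_le_ncard hsub (Set.toFinite _)).trans hS
  omega

set_option maxHeartbeats 1000000 in
/-- If the family `𝒫` consists of at least 4 pairwise vertex-disjoint paths of `K_n`,
each with at least one edge, every vertex of `End(𝒫)` is incident with at least one good
edge, and `D(e) ≤ 2` for every good edge `e`, then there are at most `|𝒫|` bad edges. -/
theorem bad_edges_le_card
    {V : Type*} [Fintype V] [DecidableEq V]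
    (B : SimpleGraph V) (t : ℕ) (ht : 4 ≤ t) (u v : Fin t → V)
    (P : ∀ i : Fin t, (⊤ : SimpleGraph V).Walk (u i) (v i))
    (hP : ∀ i, (P i).IsPath) (hne : ∀ i, u i ≠ v i)
    (hdisj : ∀ i j, i ≠ j → List.Disjoint (P i).support (P j).support)
    (hgood : ∀ x ∈ endpointSet u v, ∃ e, IsGoodEdge B u v e ∧ x ∈ e)
    (hD : ∀ e, IsGoodEdge B u v e → Dval B u v e ≤ 2) :
    Set.ncard {e : Sym2 V | IsBadEdge B u v e} ≤ t := by
  classical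
  -- endpoint of a path belongs to exactly one path
  have hidx : ∀ (i j : Fin t) (z : V), (z = u i ∨ z = v i) → (z = u j ∨ z = v j) → i = j := by
    intro i j z hi hj
    by_contra h
    have hmi : z ∈ (P i).support := by
      rcases hi with rfl | rfl
      · exact (P i).start_mem_support
      · exact (P i).end_mem_support
    have hmj : z ∈ (P j).support := by
      rcases hj with rfl | rfl
      · exact (P j).start_mem_support
      · exact (P j).end_mem_support
    exact hdisj i j h hmi hmj
  have hEnd : ∀ (z : V) (i : Fin t), (z = u i ∨ z = v i) → z ∈ endpointSet u v := by
    intro z i hi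
    rcases hi with rfl | rfl
    · exact Or.inl ⟨i, rfl⟩
    · exact Or.inr ⟨i, rfl⟩
  -- no bad edge within the endpoints of a single path
  have hsame : ∀ (i : Fin t) (z w : V), (z = u i ∨ z = v i) → (w = u i ∨ w = v i) →
      ¬ IsBadEdge B u v s(z, w) := by
    intro i z w hz hw hbad
    obtain ⟨i', j', y, hij, hz', hy, heq⟩ := badEdge_struct hbad (Sym2.mem_mk_left z w)
    rcases Sym2.eq_iff.mp heq with ⟨-, rfl⟩ | ⟨h1, h2⟩
    · exact hij ((hidx i' i z hz' hz).trans (hidx i j' w hw hy))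
    · have hzj : z = u j' ∨ z = v j' := by rw [h1]; exact hy
      exact hij ((hidx i' i z hz' hz).trans (hidx i j' z hz hzj))
  -- bad edges are never diagonal
  have hnd : ∀ (z w : V), IsBadEdge B u v s(z, w) → z ≠ w := by
    intro z w hbad h
    exact B.not_isDiag_of_mem_edgeSet hbad.2 (Sym2.mk_isDiag_iff.mpr h)
  -- degree bound: every endpoint lies in at most 2 bad edges
  have hdeg : ∀ z ∈ endpointSet u v,
      ({f : Sym2 V | IsBadEdge B u v f ∧ z ∈ f}).ncard ≤ 2 := by
    intro z hz
    obtain ⟨e, hge, hze⟩ := hgood z hz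
    have h2 := hD e hge
    unfold Dval at h2
    refine le_trans (Set.ncard_le_ncard ?_ (Set.toFinite _)) h2
    rintro f ⟨hf, hzf⟩
    exact ⟨hf, z, hze, hzf⟩
  by_cases hcase : ∃ (x : V) (f₁ f₂ : Sym2 V), IsBadEdge B u v f₁ ∧ IsBadEdge B u v f₂ ∧
      f₁ ≠ f₂ ∧ x ∈ f₁ ∧ x ∈ f₂
  · -- some endpoint has two distinct incident bad edges: then few bad edges in total
    obtain ⟨x, f₁, f₂, hf₁, hf₂, hf12, hxf₁, hxf₂⟩ := hcase
    obtain ⟨i, j₁, a, hij₁, hxi, haj, hf₁eq⟩ := badEdge_struct hf₁ hxf₁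
    obtain ⟨i', j₂, b, hij₂, hxi', hbj, hf₂eq⟩ := badEdge_struct hf₂ hxf₂
    have hii' : i' = i := hidx i' i x hxi' hxi
    rw [hii'] at hij₂
    subst hf₁eq; subst hf₂eq
    -- the other endpoint w of x's path
    obtain ⟨w, hwi, hxw, hcover⟩ :
        ∃ w, (w = u i ∨ w = v i) ∧ x ≠ w ∧ ∀ z, (z = u i ∨ z = v i) → z = x ∨ z = w := by
      rcases hxi with hx1 | hx1
      · refine ⟨v i, Or.inr rfl, hx1 ▸ hne i, ?_⟩
        intro z hz
        rcases hz with rfl | rfl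
        · exact Or.inl hx1.symm
        · exact Or.inr rfl
      · refine ⟨u i, Or.inl rfl, hx1 ▸ (hne i).symm, ?_⟩
        intro z hz
        rcases hz with rfl | rfl
        · exact Or.inr rfl
        · exact Or.inl hx1.symm
    have hxa : x ≠ a := hnd x a hf₁
    have hxb : x ≠ b := hnd x b hf₂
    have hab : a ≠ b := by rintro rfl; exact hf12 rfl
    have hwa : w ≠ a := by
      rintro rfl
      exact hij₁ (hidx i j₁ w hwi haj)
    have hwb : w ≠ b := by
      rintro rfl
      exact hij₂ (hidx i j₂ w hwi hbj)
    have hxEnd : x ∈ endpointSet u v := hEnd x i hxi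
    have haEnd : a ∈ endpointSet u v := hEnd a j₁ haj
    have hbEnd : b ∈ endpointSet u v := hEnd b j₂ hbj
    -- every vertex of every bad edge lies in {x, w, a, b}
    have hS : ∀ f, IsBadEdge B u v f → ∀ p ∈ f, p = x ∨ p = w ∨ p = a ∨ p = b := by
      intro f hf p hpf
      by_contra hp
      push_neg at hp
      obtain ⟨hpx, hpw, hpa, hpb⟩ := hp
      obtain ⟨k, l, q, hkl, hpk, hql, hfeq⟩ := badEdge_struct hf hpf
      have hki : k ≠ i := by
        rintro rfl
        rcases hcover p hpk with rfl | rfl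
        · exact hpx rfl
        · exact hpw rfl
      have hcross : IsCrossEdge u v s(x, p) := ⟨i, k, x, p, (Ne.symm hki), hxi, hpk, rfl⟩
      have hd1 : s(x, a) ≠ s(x, p) := by
        simp only [ne_eq, Sym2.eq_iff]
        push_neg
        constructor
        · intro _; exact Ne.symm hpa
        · intro h; exact absurd h.symm hpx
      have hd2 : s(x, b) ≠ s(x, p) := by
        simp only [ne_eq, Sym2.eq_iff]
        push_neg
        constructor
        · intro _; exact Ne.symm hpb
        · intro h; exact absurd h.symm hpx
      have hd12 : s(x, a) ≠ s(x, b) := by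
        simp only [ne_eq, Sym2.eq_iff]
        push_neg
        constructor
        · intro _; exact hab
        · intro h; exact absurd h hxb
      by_cases hmem : s(x, p) ∈ B.edgeSet
      · -- a third bad edge at x, contradicting the degree bound at x
        have hbadxp : IsBadEdge B u v s(x, p) := ⟨hcross, hmem⟩
        refine three_distinct_ncard_le_two (hdeg x hxEnd)
          (g₁ := s(x, a)) (g₂ := s(x, b)) (g₃ := s(x, p)) ?_ ?_ ?_ hd12 hd1 hd2
        · exact ⟨hf₁, Sym2.mem_mk_left _ _⟩
        · exact ⟨hf₂, Sym2.mem_mk_left _ _⟩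
        · exact ⟨hbadxp, Sym2.mem_mk_left _ _⟩
      · -- s(x,p) is good, but three bad edges meet it
        have hgoodxp : IsGoodEdge B u v s(x, p) := ⟨hcross, hmem⟩
        have h2 := hD _ hgoodxp
        unfold Dval at h2
        have hfa : f ≠ s(x, a) := by
          rintro rfl
          exact (Sym2.mem_iff.mp hpf).elim hpx hpa
        have hfb : f ≠ s(x, b) := by
          rintro rfl
          exact (Sym2.mem_iff.mp hpf).elim hpx hpb
        refine three_distinct_ncard_le_two h2
          (g₁ := s(x, a)) (g₂ := s(x, b)) (g₃ := f) ?_ ?_ ?_ hd12 hfa.symm hfb.symm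
        · exact ⟨hf₁, x, Sym2.mem_mk_left _ _, Sym2.mem_mk_left _ _⟩
        · exact ⟨hf₂, x, Sym2.mem_mk_left _ _, Sym2.mem_mk_left _ _⟩
        · exact ⟨hf, p, Sym2.mem_mk_right _ _, hpf⟩
    -- hence every bad edge is among five explicit edges
    have h5 : {e : Sym2 V | IsBadEdge B u v e} ⊆
        ({s(x,a), s(x,b), s(w,a), s(w,b), s(a,b)} : Set (Sym2 V)) := by
      intro f hf
      revert hf
      induction f using Sym2.ind with | _ p q => ?_
      intro hf
      have hp := hS _ hf p (Sym2.mem_mk_left p q)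
      have hq := hS _ hf q (Sym2.mem_mk_right p q)
      have hnd' := hnd p q hf
      simp only [Set.mem_insert_iff, Set.mem_singleton_iff]
      rcases hp with rfl | rfl | rfl | rfl <;> rcases hq with rfl | rfl | rfl | rfl <;>
        first
          | exact absurd rfl hnd'
          | exact absurd hf (hsame i _ _ hxi hwi)
          | exact absurd hf (hsame i _ _ hwi hxi)
          | exact Or.inl rfl
          | exact Or.inl Sym2.eq_swap
          | exact Or.inr (Or.inl rfl)
          | exact Or.inr (Or.inl Sym2.eq_swap)
          | exact Or.inr (Or.inr (Or.inl rfl))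
          | exact Or.inr (Or.inr (Or.inl Sym2.eq_swap))
          | exact Or.inr (Or.inr (Or.inr (Or.inl rfl)))
          | exact Or.inr (Or.inr (Or.inr (Or.inl Sym2.eq_swap)))
          | exact Or.inr (Or.inr (Or.inr (Or.inr rfl)))
          | exact Or.inr (Or.inr (Or.inr (Or.inr Sym2.eq_swap)))
    have hfinal : Set.ncard {e : Sym2 V | IsBadEdge B u v e} ≤ 4 := by
      by_cases habbad : IsBadEdge B u v s(a, b)
      · -- then neither s(w,a) nor s(w,b) is bad
        have hnwa : ¬ IsBadEdge B u v s(w, a) := by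
          intro hbad
          refine three_distinct_ncard_le_two (hdeg a haEnd)
            (g₁ := s(x, a)) (g₂ := s(a, b)) (g₃ := s(w, a)) ?_ ?_ ?_ ?_ ?_ ?_
          · exact ⟨hf₁, Sym2.mem_mk_right _ _⟩
          · exact ⟨habbad, Sym2.mem_mk_left _ _⟩
          · exact ⟨hbad, Sym2.mem_mk_right _ _⟩
          · simp only [ne_eq, Sym2.eq_iff]
            push_neg
            exact ⟨fun h => absurd h hxa, fun h => absurd h hxb⟩
          · simp only [ne_eq, Sym2.eq_iff]
            push_neg
            exact ⟨fun h => absurd h hxw, fun h _ => absurd h hxa⟩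
          · simp only [ne_eq, Sym2.eq_iff]
            push_neg
            exact ⟨fun h => absurd h.symm hwa, fun _ => Ne.symm hwb⟩
        have hnwb : ¬ IsBadEdge B u v s(w, b) := by
          intro hbad
          refine three_distinct_ncard_le_two (hdeg b hbEnd)
            (g₁ := s(x, b)) (g₂ := s(a, b)) (g₃ := s(w, b)) ?_ ?_ ?_ ?_ ?_ ?_
          · exact ⟨hf₂, Sym2.mem_mk_right _ _⟩
          · exact ⟨habbad, Sym2.mem_mk_right _ _⟩
          · exact ⟨hbad, Sym2.mem_mk_right _ _⟩
          · simp only [ne_eq, Sym2.eq_iff]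
            push_neg
            exact ⟨fun h => absurd h hxa, fun h => absurd h hxb⟩
          · simp only [ne_eq, Sym2.eq_iff]
            push_neg
            exact ⟨fun h => absurd h hxw, fun h => absurd h hxb⟩
          · simp only [ne_eq, Sym2.eq_iff]
            push_neg
            exact ⟨fun h => absurd h.symm hwa, fun h => absurd h hab⟩
        have hsub : {e : Sym2 V | IsBadEdge B u v e} ⊆
            ({s(x,a), s(x,b), s(a,b)} : Set (Sym2 V)) := by
          intro f hf
          rcases h5 hf with h | h | h | h | h
          · exact Or.inl h
          · exact Or.inr (Or.inl h)
          · exact absurd (h ▸ hf) hnwa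
          · exact absurd (h ▸ hf) hnwb
          · exact Or.inr (Or.inr h)
        refine (Set.ncard_le_ncard hsub (Set.toFinite _)).trans ?_
        refine (Set.ncard_insert_le _ _).trans ?_
        have := (Set.ncard_insert_le s(x,b) ({s(a,b)} : Set (Sym2 V)))
        simp only [Set.ncard_singleton] at this ⊢
        omega
      · have hsub : {e : Sym2 V | IsBadEdge B u v e} ⊆
            ({s(x,a), s(x,b), s(w,a), s(w,b)} : Set (Sym2 V)) := by
          intro f hf
          rcases h5 hf with h | h | h | h | h
          · exact Or.inl h
          · exact Or.inr (Or.inl h)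
          · exact Or.inr (Or.inr (Or.inl h))
          · exact Or.inr (Or.inr (Or.inr h))
          · exact absurd (h ▸ hf) habbad
        refine (Set.ncard_le_ncard hsub (Set.toFinite _)).trans ?_
        refine (Set.ncard_insert_le _ _).trans ?_
        have h1 := (Set.ncard_insert_le s(x,b) ({s(w,a), s(w,b)} : Set (Sym2 V)))
        have h2 := (Set.ncard_insert_le s(w,a) ({s(w,b)} : Set (Sym2 V)))
        simp only [Set.ncard_singleton] at h1 h2 ⊢
        omega
    omega
  · -- each vertex lies in at most one bad edge: bad edges form a matching
    push_neg at hcase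
    have hone : ∀ (z : V) (f g : Sym2 V), IsBadEdge B u v f → IsBadEdge B u v g →
        z ∈ f → z ∈ g → f = g := by
      intro z f g hf hg hzf hzg
      by_contra hfg
      exact hcase z f g hf hg hfg hzf hzg
    have hfin : ({e : Sym2 V | IsBadEdge B u v e} : Set (Sym2 V)).Finite := Set.toFinite _
    rw [Set.ncard_eq_toFinset_card _ hfin]
    set BadF := hfin.toFinset with hBadF
    have hBadF_mem : ∀ e, e ∈ BadF ↔ IsBadEdge B u v e := by
      intro e; rw [hBadF, Set.Finite.mem_toFinset]; rfl
    set vf : Sym2 V → Finset V := fun e => Finset.univ.filter (· ∈ e) with hvf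
    have hvf_mem : ∀ (e : Sym2 V) (z : V), z ∈ vf e ↔ z ∈ e := by
      intro e z; simp [hvf]
    have hvf_card : ∀ e ∈ BadF, (vf e).card = 2 := by
      intro e he
      revert he
      induction e using Sym2.ind with | _ p q => ?_
      intro he
      have hbad := (hBadF_mem _).mp he
      have hpq : p ≠ q := hnd p q hbad
      have : vf s(p, q) = {p, q} := by
        ext z
        simp [hvf, Sym2.mem_iff]
      rw [this]
      exact Finset.card_pair hpq
    have hdisjoint : ∀ e ∈ BadF, ∀ f ∈ BadF, e ≠ f → Disjoint (vf e) (vf f) := by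
      intro e he f hf hef
      rw [Finset.disjoint_left]
      intro z hze hzf
      exact hef (hone z e f ((hBadF_mem e).mp he) ((hBadF_mem f).mp hf)
        ((hvf_mem e z).mp hze) ((hvf_mem f z).mp hzf))
    have hcount : (BadF.biUnion vf).card = ∑ e ∈ BadF, (vf e).card :=
      Finset.card_biUnion hdisjoint
    have hsum : ∑ e ∈ BadF, (vf e).card = 2 * BadF.card := by
      rw [Finset.sum_congr rfl hvf_card, Finset.sum_const, smul_eq_mul, mul_comm]
    set EndF : Finset V := Finset.univ.image u ∪ Finset.univ.image v with hEndF
    have hsubE : BadF.biUnion vf ⊆ EndF := by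
      intro z hz
      rw [Finset.mem_biUnion] at hz
      obtain ⟨e, he, hze⟩ := hz
      obtain ⟨i, j, y, hij, hzi, _, _⟩ :=
        badEdge_struct ((hBadF_mem e).mp he) ((hvf_mem e z).mp hze)
      rw [hEndF, Finset.mem_union]
      rcases hzi with rfl | rfl
      · exact Or.inl (Finset.mem_image.mpr ⟨i, Finset.mem_univ _, rfl⟩)
      · exact Or.inr (Finset.mem_image.mpr ⟨i, Finset.mem_univ _, rfl⟩)
    have hEcard : EndF.card ≤ 2 * t := by
      refine (Finset.card_union_le _ _).trans ?_
      have h1 := Finset.card_image_le (s := (Finset.univ : Finset (Fin t))) (f := u)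
      have h2 := Finset.card_image_le (s := (Finset.univ : Finset (Fin t))) (f := v)
      simp only [Finset.card_univ, Fintype.card_fin] at h1 h2
      omega
    have := Finset.card_le_card hsubE
    omega
end

section
/- Suppose |𝒫| ≥ 4, every vertex of End(𝒫) is incident with at least one good edge, D(e) ≤ 2 holds for every good edge e, and some vertex x ∈ End(𝒫) is incident with exactly two bad edges. Then the total number of bad edges is at most 4. -/
/-- If the family `𝒫` consists of at least 4 pairwise vertex-disjoint paths of `K_n`,
each with at least one edge, every vertex of `End(𝒫)` is incident with at least one good
edge, `D(e) ≤ 2` for every good edge `e`, and some vertex `x ∈ End(𝒫)` is incident with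
exactly two bad edges, then there are at most 4 bad edges in total. -/
theorem bad_edges_le_four
    {V : Type*} [Fintype V] [DecidableEq V]
    (B : SimpleGraph V) (t : ℕ) (ht : 4 ≤ t) (u v : Fin t → V)
    (P : ∀ i : Fin t, (⊤ : SimpleGraph V).Walk (u i) (v i))
    (hP : ∀ i, (P i).IsPath) (hne : ∀ i, u i ≠ v i)
    (hdisj : ∀ i j, i ≠ j → List.Disjoint (P i).support (P j).support)
    (hgood : ∀ x ∈ endpointSet u v, ∃ e, IsGoodEdge B u v e ∧ x ∈ e)
    (hD : ∀ e, IsGoodEdge B u v e → Dval B u v e ≤ 2)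
    (x : V) (hx : x ∈ endpointSet u v)
    (hx2 : Set.ncard {e : Sym2 V | IsBadEdge B u v e ∧ x ∈ e} = 2) :
    Set.ncard {e : Sym2 V | IsBadEdge B u v e} ≤ 4 := by
  classical
  -- uniqueness of path index for each endpoint
  have hinj : ∀ (z : V) (i j : Fin t), (z = u i ∨ z = v i) → (z = u j ∨ z = v j) → i = j := by
    intro z i j hi hj
    by_contra h
    have hd := hdisj i j h
    have hzi : z ∈ (P i).support := by
      rcases hi with rfl | rfl
      · exact (P i).start_mem_support
      · exact (P i).end_mem_support
    have hzj : z ∈ (P j).support := by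
      rcases hj with rfl | rfl
      · exact (P j).start_mem_support
      · exact (P j).end_mem_support
    exact hd hzi hzj
  have ne_of_idx : ∀ (z w : V) (i j : Fin t), i ≠ j → (z = u i ∨ z = v i) →
      (w = u j ∨ w = v j) → z ≠ w := by
    rintro z w i j hij hi hj rfl
    exact hij (hinj z i j hi hj)
  have mem_ep : ∀ (z : V) (k : Fin t), (z = u k ∨ z = v k) → z ∈ endpointSet u v := by
    rintro z k (rfl | rfl)
    · exact Or.inl ⟨k, rfl⟩
    · exact Or.inr ⟨k, rfl⟩
  have hfin : ∀ s : Set (Sym2 V), s.Finite := fun s => s.toFinite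
  -- every endpoint is in at most 2 bad edges
  have bd2 : ∀ z ∈ endpointSet u v, {f : Sym2 V | IsBadEdge B u v f ∧ z ∈ f}.ncard ≤ 2 := by
    intro z hz
    obtain ⟨g, hg, hzg⟩ := hgood z hz
    have hsub : {f : Sym2 V | IsBadEdge B u v f ∧ z ∈ f} ⊆
        {f : Sym2 V | IsBadEdge B u v f ∧ ∃ w, w ∈ g ∧ w ∈ f} := by
      rintro f ⟨hf, hzf⟩
      exact ⟨hf, z, hzg, hzf⟩
    exact le_trans (Set.ncard_le_ncard hsub (hfin _)) (hD g hg)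
  -- structure of bad edges through a vertex
  have struct : ∀ f : Sym2 V, IsBadEdge B u v f → ∀ z ∈ f,
      ∃ (w : V) (k l : Fin t), k ≠ l ∧ (z = u k ∨ z = v k) ∧ (w = u l ∨ w = v l) ∧
        f = s(z, w) := by
    rintro f ⟨⟨i, j, p, q, hij, hp, hq, rfl⟩, hB⟩ z hz
    rw [Sym2.mem_iff] at hz
    rcases hz with rfl | rfl
    · exact ⟨q, i, j, hij, hp, hq, rfl⟩
    · exact ⟨p, j, i, hij.symm, hq, hp, Sym2.eq_swap⟩
  -- the two bad edges at x
  obtain ⟨e1, e2, he12, hset⟩ := Set.ncard_eq_two.mp hx2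
  have hmem : ∀ e : Sym2 V, (IsBadEdge B u v e ∧ x ∈ e) ↔ (e = e1 ∨ e = e2) := by
    intro e
    constructor
    · intro h
      have : e ∈ {e : Sym2 V | IsBadEdge B u v e ∧ x ∈ e} := h
      rw [hset] at this
      exact this
    · rintro (rfl | rfl)
      · have : e ∈ ({e, e2} : Set (Sym2 V)) := by left; rfl
        rw [← hset] at this; exact this
      · have : e ∈ ({e1, e} : Set (Sym2 V)) := by right; rfl
        rw [← hset] at this; exact this
  have he1 : IsBadEdge B u v e1 ∧ x ∈ e1 := (hmem e1).mpr (Or.inl rfl)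
  have he2 : IsBadEdge B u v e2 ∧ x ∈ e2 := (hmem e2).mpr (Or.inr rfl)
  -- index of x
  obtain ⟨i₀, hxi⟩ : ∃ i, x = u i ∨ x = v i := by
    rcases hx with ⟨i, hi⟩ | ⟨i, hi⟩
    · exact ⟨i, Or.inl hi.symm⟩
    · exact ⟨i, Or.inr hi.symm⟩
  -- partner x'
  set x' : V := if x = u i₀ then v i₀ else u i₀ with hx'def
  have hx'i : x' = u i₀ ∨ x' = v i₀ := by
    rw [hx'def]; split
    · exact Or.inr rfl
    · exact Or.inl rfl
  have hxx' : x ≠ x' := by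
    rw [hx'def]; split
    · rename_i h; rw [h]; exact hne i₀
    · rename_i h; exact h
  have hpair : ∀ z : V, (z = u i₀ ∨ z = v i₀) → z = x ∨ z = x' := by
    intro z hz
    rw [hx'def]
    by_cases hxu : x = u i₀
    · rcases hz with rfl | rfl
      · left; exact hxu.symm
      · right; simp [hxu]
    · have hxv : x = v i₀ := hxi.resolve_left hxu
      rcases hz with rfl | rfl
      · right; simp [hxu]
      · left; exact hxv.symm
  -- extract a and b
  obtain ⟨a, k1, ia, hk1ia, hxk1, hai, he1eq⟩ := struct e1 he1.1 x he1.2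
  obtain ⟨b, k2, ib, hk2ib, hxk2, hbi, he2eq⟩ := struct e2 he2.1 x he2.2
  have hk1e : k1 = i₀ := hinj x k1 i₀ hxk1 hxi
  have hk2e : k2 = i₀ := hinj x k2 i₀ hxk2 hxi
  have hia0 : ia ≠ i₀ := fun h => hk1ia (hk1e.trans h.symm)
  have hib0 : ib ≠ i₀ := fun h => hk2ib (hk2e.trans h.symm)
  have hax : a ≠ x := ne_of_idx a x ia i₀ hia0 hai hxi
  have hbx : b ≠ x := ne_of_idx b x ib i₀ hib0 hbi hxi
  have hax' : a ≠ x' := ne_of_idx a x' ia i₀ hia0 hai hx'i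
  have hbx' : b ≠ x' := ne_of_idx b x' ib i₀ hib0 hbi hx'i
  have hab : a ≠ b := by
    rintro rfl
    exact he12 (he1eq.trans he2eq.symm)
  -- every bad edge through x is e1 or e2
  have badx : ∀ f : Sym2 V, IsBadEdge B u v f → x ∈ f → f = e1 ∨ f = e2 :=
    fun f hf hxf => (hmem f).mp ⟨hf, hxf⟩
  -- Claim C: every vertex of a bad edge is in {x, x', a, b}
  have claimC : ∀ f : Sym2 V, IsBadEdge B u v f → ∀ p ∈ f,
      p = x ∨ p = x' ∨ p = a ∨ p = b := by
    intro f hf p hp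
    obtain ⟨w, k, l, hkl, hpk, hwl, hfeq⟩ := struct f hf p hp
    by_cases hk0 : k = i₀
    · subst hk0
      rcases hpair p hpk with h | h
      · exact Or.inl h
      · exact Or.inr (Or.inl h)
    · by_cases hpa : p = a
      · exact Or.inr (Or.inr (Or.inl hpa))
      by_cases hpb : p = b
      · exact Or.inr (Or.inr (Or.inr hpb))
      exfalso
      have hpx : p ≠ x := ne_of_idx p x k i₀ hk0 hpk hxi
      have hcross : IsCrossEdge u v s(x, p) :=
        ⟨i₀, k, x, p, fun h => hk0 h.symm, hxi, hpk, rfl⟩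
      by_cases hBxp : s(x, p) ∈ B.edgeSet
      · rcases badx _ ⟨hcross, hBxp⟩ (Sym2.mem_mk_left x p) with h | h
        · rw [he1eq, Sym2.eq_iff] at h
          rcases h with ⟨-, h⟩ | ⟨h, h'⟩
          · exact hpa h
          · exact hpx h'
        · rw [he2eq, Sym2.eq_iff] at h
          rcases h with ⟨-, h⟩ | ⟨h, h'⟩
          · exact hpb h
          · exact hpx h'
      · have hgd : IsGoodEdge B u v s(x, p) := ⟨hcross, hBxp⟩
        have hfe1 : f ≠ e1 := by
          rintro rfl
          rw [he1eq, Sym2.mem_iff] at hp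
          rcases hp with h | h
          · exact hpx h
          · exact hpa h
        have hfe2 : f ≠ e2 := by
          rintro rfl
          rw [he2eq, Sym2.mem_iff] at hp
          rcases hp with h | h
          · exact hpx h
          · exact hpb h
        have hsub3 : ({e1, e2, f} : Set (Sym2 V)) ⊆
            {g : Sym2 V | IsBadEdge B u v g ∧ ∃ z, z ∈ s(x, p) ∧ z ∈ g} := by
          rintro g (rfl | rfl | rfl)
          · exact ⟨he1.1, x, Sym2.mem_mk_left x p, he1.2⟩
          · exact ⟨he2.1, x, Sym2.mem_mk_left x p, he2.2⟩
          · exact ⟨hf, p, Sym2.mem_mk_right x p, hp⟩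
        have h3 : ({e1, e2, f} : Set (Sym2 V)).ncard = 3 :=
          Set.ncard_eq_three.mpr ⟨e1, e2, f, he12, hfe1.symm, hfe2.symm, rfl⟩
        have hle := Set.ncard_le_ncard hsub3 (hfin _)
        have := hD _ hgd
        rw [Dval] at this
        omega
  -- bad edges are among five explicit edges
  have hsub5 : {e : Sym2 V | IsBadEdge B u v e} ⊆
      ({e1, e2, s(x', a), s(x', b), s(a, b)} : Set (Sym2 V)) := by
    intro f hf
    obtain ⟨⟨i, j, p, q, hij, hp, hq, hfeq⟩, hB⟩ := hf
    have hpq : p ≠ q := by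
      intro h
      rw [hfeq, h] at hB
      exact B.irrefl (B.mem_edgeSet.mp hB)
    have hpf : p ∈ f := by rw [hfeq]; exact Sym2.mem_mk_left p q
    have hqf : q ∈ f := by rw [hfeq]; exact Sym2.mem_mk_right p q
    have hf' : IsBadEdge B u v f := ⟨⟨i, j, p, q, hij, hp, hq, hfeq⟩, hB⟩
    have hcp := claimC f hf' p hpf
    have hcq := claimC f hf' q hqf
    have hbx2 : ∀ z ∈ f, z = x → f = e1 ∨ f = e2 := by
      rintro z hz rfl
      exact badx f hf' hz
    rcases hcp with rfl | rfl | rfl | rfl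
    · rcases badx f hf' hpf with rfl | rfl
      · left; rfl
      · right; left; rfl
    · -- p = x'
      rcases hcq with rfl | rfl | rfl | rfl
      · rcases badx f hf' hqf with rfl | rfl
        · left; rfl
        · right; left; rfl
      · exact absurd rfl hpq
      · right; right; left; rw [hfeq]
      · right; right; right; left; rw [hfeq]
    · -- p = a
      rcases hcq with rfl | rfl | rfl | rfl
      · rcases badx f hf' hqf with rfl | rfl
        · left; rfl
        · right; left; rfl
      · right; right; left; rw [hfeq]; exact Sym2.eq_swap
      · exact absurd rfl hpq
      · right; right; right; right; rw [hfeq]; rfl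
    · -- p = b
      rcases hcq with rfl | rfl | rfl | rfl
      · rcases badx f hf' hqf with rfl | rfl
        · left; rfl
        · right; left; rfl
      · right; right; right; left; rw [hfeq]; exact Sym2.eq_swap
      · right; right; right; right; rw [hfeq]; exact Sym2.eq_swap
      · exact absurd rfl hpq
  -- now the final case analysis
  have haE : a ∈ endpointSet u v := mem_ep a ia hai
  have hbE : b ∈ endpointSet u v := mem_ep b ib hbi
  have hcard4 : ∀ c1 c2 c3 c4 : Sym2 V, ({c1, c2, c3, c4} : Set (Sym2 V)).ncard ≤ 4 := by
    intro c1 c2 c3 c4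
    have h1 := Set.ncard_insert_le c1 ({c2, c3, c4} : Set (Sym2 V))
    have h2 := Set.ncard_insert_le c2 ({c3, c4} : Set (Sym2 V))
    have h3 := Set.ncard_insert_le c3 ({c4} : Set (Sym2 V))
    have h4 : ({c4} : Set (Sym2 V)).ncard = 1 := Set.ncard_singleton c4
    omega
  by_cases habBad : IsBadEdge B u v s(a, b)
  · -- then s(x',a) and s(x',b) are not bad
    have hnxa : ¬ IsBadEdge B u v s(x', a) := by
      intro hbad
      have hsub3 : ({e1, s(a, b), s(x', a)} : Set (Sym2 V)) ⊆
          {f : Sym2 V | IsBadEdge B u v f ∧ a ∈ f} := by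
        rintro g (rfl | rfl | rfl)
        · exact ⟨he1.1, by rw [he1eq]; exact Sym2.mem_mk_right x a⟩
        · exact ⟨habBad, Sym2.mem_mk_left a b⟩
        · exact ⟨hbad, Sym2.mem_mk_right x' a⟩
      have hd1 : e1 ≠ s(a, b) := by
        rw [he1eq]
        intro hcontra
        rw [Sym2.eq_iff] at hcontra
        rcases hcontra with ⟨h, -⟩ | ⟨h, -⟩
        · exact hax h.symm
        · exact hbx h.symm
      have hd2 : e1 ≠ s(x', a) := by
        rw [he1eq]
        intro hcontra
        rw [Sym2.eq_iff] at hcontra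
        rcases hcontra with ⟨h, -⟩ | ⟨h, h'⟩
        · exact hxx' h
        · exact hax h.symm
      have hd3 : s(a, b) ≠ s(x', a) := by
        intro hcontra
        rw [Sym2.eq_iff] at hcontra
        rcases hcontra with ⟨h, -⟩ | ⟨-, h⟩
        · exact hax' h
        · exact hbx' h
      have h3 : ({e1, s(a, b), s(x', a)} : Set (Sym2 V)).ncard = 3 :=
        Set.ncard_eq_three.mpr ⟨_, _, _, hd1, hd2, hd3, rfl⟩
      have hle := Set.ncard_le_ncard hsub3 (hfin _)
      have := bd2 a haE
      omega
    have hnxb : ¬ IsBadEdge B u v s(x', b) := by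
      intro hbad
      have hsub3 : ({e2, s(a, b), s(x', b)} : Set (Sym2 V)) ⊆
          {f : Sym2 V | IsBadEdge B u v f ∧ b ∈ f} := by
        rintro g (rfl | rfl | rfl)
        · exact ⟨he2.1, by rw [he2eq]; exact Sym2.mem_mk_right x b⟩
        · exact ⟨habBad, Sym2.mem_mk_right a b⟩
        · exact ⟨hbad, Sym2.mem_mk_right x' b⟩
      have hd1 : e2 ≠ s(a, b) := by
        rw [he2eq]
        intro hcontra
        rw [Sym2.eq_iff] at hcontra
        rcases hcontra with ⟨h, -⟩ | ⟨h, -⟩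
        · exact hax h.symm
        · exact hbx h.symm
      have hd2 : e2 ≠ s(x', b) := by
        rw [he2eq]
        intro hcontra
        rw [Sym2.eq_iff] at hcontra
        rcases hcontra with ⟨h, -⟩ | ⟨h, h'⟩
        · exact hxx' h
        · exact hbx h.symm
      have hd3 : s(a, b) ≠ s(x', b) := by
        intro hcontra
        rw [Sym2.eq_iff] at hcontra
        rcases hcontra with ⟨h, -⟩ | ⟨-, h⟩
        · exact hax' h
        · exact hbx' h
      have h3 : ({e2, s(a, b), s(x', b)} : Set (Sym2 V)).ncard = 3 :=
        Set.ncard_eq_three.mpr ⟨_, _, _, hd1, hd2, hd3, rfl⟩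
      have hle := Set.ncard_le_ncard hsub3 (hfin _)
      have := bd2 b hbE
      omega
    have hsub3' : {e : Sym2 V | IsBadEdge B u v e} ⊆
        ({e1, e2, s(a, b), s(a, b)} : Set (Sym2 V)) := by
      intro f hf
      rcases hsub5 hf with rfl | rfl | h | h | h
      · left; rfl
      · right; left; rfl
      · exact absurd (h ▸ hf) hnxa
      · exact absurd (h ▸ hf) hnxb
      · right; right; left; exact h
    exact le_trans (Set.ncard_le_ncard hsub3' (hfin _)) (hcard4 _ _ _ _)
  · have hsub4 : {e : Sym2 V | IsBadEdge B u v e} ⊆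
        ({e1, e2, s(x', a), s(x', b)} : Set (Sym2 V)) := by
      intro f hf
      rcases hsub5 hf with rfl | rfl | h | h | h
      · left; rfl
      · right; left; rfl
      · right; right; left; exact h
      · right; right; right; exact h
      · exact absurd (h ▸ hf) habBad
    exact le_trans (Set.ncard_le_ncard hsub4 (hfin _)) (hcard4 _ _ _ _)
end

section
/- Let p = |𝒫| > 2 and let br denote the number of bad edges, and suppose br < 2p − 2. Let e be a good edge that maximizes D(e) among all good edges, joining an endpoint of a path P1 ∈ 𝒫 to an endpoint of a different path P2 ∈ 𝒫. Let 𝒫' be the family obtained from 𝒫 by replacing P1 and P2 with the single path whose edge set is E(P1) ∪ E(P2) ∪ {e}, and let br' denote the number of bad edges with respect to 𝒫' (with the same graph B) and p' = |𝒫'| = p − 1. Then br' < 2p' − 2; moreover, if D(e) ≤ 1, then br' = 0. -/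
lemma core_no_far_bad {V : Type*} [Fintype V] [DecidableEq V]
    (B : SimpleGraph V) (t : ℕ) (ht : 2 < t) (u v : Fin t → V)
    (hne : ∀ i, u i ≠ v i)
    (hsep : ∀ (k k' : Fin t) (w : V), (w = u k ∨ w = v k) → (w = u k' ∨ w = v k') → k = k')
    (hbr : Set.ncard {e : Sym2 V | IsBadEdge B u v e} < 2 * t - 2)
    (x y : V)
    (hmax : ∀ f, IsGoodEdge B u v f → Dval B u v f ≤ Dval B u v s(x, y))
    (h1 : Dval B u v s(x, y) ≤ 1)
    (f : Sym2 V) (hf : IsBadEdge B u v f) (hfx : x ∉ f) (hfy : y ∉ f) : False := by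
  classical
  -- at most one bad edge meets any good edge
  have hsub : ∀ e', IsGoodEdge B u v e' →
      ∀ g₁ ∈ {g : Sym2 V | IsBadEdge B u v g ∧ ∃ z, z ∈ e' ∧ z ∈ g},
      ∀ g₂ ∈ {g : Sym2 V | IsBadEdge B u v g ∧ ∃ z, z ∈ e' ∧ z ∈ g}, g₁ = g₂ := by
    intro e' hgood
    have hle : Dval B u v e' ≤ 1 := le_trans (hmax e' hgood) h1
    exact (Set.ncard_le_one (Set.toFinite _)).1 hle
  -- the key sub-lemma
  have key : ∀ (a b : V) (j₁ j₂ : Fin t), j₁ ≠ j₂ → (a = u j₁ ∨ a = v j₁) →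
      (b = u j₂ ∨ b = v j₂) → s(a, b) ∈ B.edgeSet →
      (∀ g, IsBadEdge B u v g → a ∈ g → g = s(a, b)) ∧
      ∃ e', IsGoodEdge B u v e' ∧
        s(a, b) ∈ {g : Sym2 V | IsBadEdge B u v g ∧ ∃ z, z ∈ e' ∧ z ∈ g} := by
    intro a b j₁ j₂ hj ha hb hB
    have habbad : IsBadEdge B u v s(a, b) := ⟨⟨j₁, j₂, a, b, hj, ha, hb, rfl⟩, hB⟩
    -- Step 1: find a good edge at `a`
    have hstep1 : ∃ (k : Fin t) (w : V), k ≠ j₁ ∧ (w = u k ∨ w = v k) ∧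
        s(a, w) ∉ B.edgeSet := by
      by_contra hcon
      push_neg at hcon
      have hnae : ∀ k, k ≠ j₁ → ∀ w : V, (w = u k ∨ w = v k) → w ≠ a := by
        intro k hk w hw h
        exact hk (hsep k j₁ w hw (by rw [h]; exact ha))
      have hinj : Set.InjOn (Sum.elim (fun k => s(a, u k)) (fun k => s(a, v k)) :
          Fin t ⊕ Fin t → Sym2 V)
          ↑((Finset.univ.erase j₁).disjSum (Finset.univ.erase j₁)) := by
        rintro (k | k) hk (k' | k') hk' hEq <;>
          simp only [Finset.mem_coe, Finset.inl_mem_disjSum, Finset.inr_mem_disjSum,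
            Finset.mem_erase, Finset.mem_univ, and_true] at hk hk' <;>
          simp only [Sum.elim_inl, Sum.elim_inr, Sym2.eq_iff] at hEq
        · rcases hEq with ⟨-, h⟩ | ⟨-, h⟩
          · exact congrArg Sum.inl (hsep k k' (u k) (Or.inl rfl) (Or.inl h))
          · exact absurd h (hnae k hk _ (Or.inl rfl))
        · rcases hEq with ⟨-, h⟩ | ⟨-, h⟩
          · exfalso
            have hkk := hsep k k' (u k) (Or.inl rfl) (Or.inr h)
            subst hkk
            exact hne k h
          · exact absurd h (hnae k hk _ (Or.inl rfl))
        · rcases hEq with ⟨-, h⟩ | ⟨-, h⟩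
          · exfalso
            have hkk := hsep k k' (v k) (Or.inr rfl) (Or.inl h)
            subst hkk
            exact hne k h.symm
          · exact absurd h (hnae k hk _ (Or.inr rfl))
        · rcases hEq with ⟨-, h⟩ | ⟨-, h⟩
          · exact congrArg Sum.inr (hsep k k' (v k) (Or.inr rfl) (Or.inr h))
          · exact absurd h (hnae k hk _ (Or.inr rfl))
      have himg : ↑(((Finset.univ.erase j₁).disjSum (Finset.univ.erase j₁)).image
          (Sum.elim (fun k => s(a, u k)) (fun k => s(a, v k)))) ⊆
          {e : Sym2 V | IsBadEdge B u v e} := by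
        intro e' he'
        simp only [Finset.coe_image, Set.mem_image, Finset.mem_coe] at he'
        obtain ⟨p, hp, rfl⟩ := he'
        rcases p with k | k <;>
          simp only [Finset.inl_mem_disjSum, Finset.inr_mem_disjSum, Finset.mem_erase,
            Finset.mem_univ, and_true, Sum.elim_inl, Sum.elim_inr] at hp ⊢
        · exact ⟨⟨j₁, k, a, u k, Ne.symm hp, ha, Or.inl rfl, rfl⟩,
            hcon k (u k) hp (Or.inl rfl)⟩
        · exact ⟨⟨j₁, k, a, v k, Ne.symm hp, ha, Or.inr rfl, rfl⟩,
            hcon k (v k) hp (Or.inr rfl)⟩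
      have hle := Set.ncard_le_ncard himg (Set.toFinite _)
      rw [Set.ncard_coe_finset, Finset.card_image_of_injOn hinj, Finset.card_disjSum,
        Finset.card_erase_of_mem (Finset.mem_univ _), Finset.card_univ, Fintype.card_fin] at hle
      omega
    obtain ⟨k, w₀, hk, hw₀, hgw⟩ := hstep1
    have hgood : IsGoodEdge B u v s(a, w₀) :=
      ⟨⟨j₁, k, a, w₀, Ne.symm hk, ha, hw₀, rfl⟩, hgw⟩
    have hmem : s(a, b) ∈ {g : Sym2 V | IsBadEdge B u v g ∧ ∃ z, z ∈ s(a, w₀) ∧ z ∈ g} :=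
      ⟨habbad, a, Sym2.mem_mk_left _ _, Sym2.mem_mk_left _ _⟩
    refine ⟨fun g hg hag => hsub _ hgood g ⟨hg, a, Sym2.mem_mk_left _ _, hag⟩ _ hmem,
      s(a, w₀), hgood, hmem⟩
  -- decompose f
  obtain ⟨⟨j₁, j₂, a, b, hj, ha, hb, hfab⟩, hfB⟩ := hf
  subst hfab
  rw [Sym2.mem_iff] at hfx hfy
  push_neg at hfx hfy
  obtain ⟨hxa, hxb⟩ := hfx
  obtain ⟨hya, hyb⟩ := hfy
  have hab : a ≠ b := fun h => hj (hsep j₁ j₂ a ha (by rw [h]; exact hb))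
  obtain ⟨keyA, e₀, he₀, hfe₀⟩ := key a b j₁ j₂ hj ha hb hfB
  have hBba : s(b, a) ∈ B.edgeSet := by rwa [Sym2.eq_swap] at hfB
  obtain ⟨keyB, -⟩ := key b a j₂ j₁ (Ne.symm hj) hb ha hBba
  -- every bad edge equals f
  have hall : ∀ g, IsBadEdge B u v g → g = s(a, b) := by
    intro g hg
    by_cases hga : a ∈ g
    · exact keyA g hg hga
    by_cases hgb : b ∈ g
    · exact (keyB g hg hgb).trans Sym2.eq_swap
    obtain ⟨⟨k₁, k₂, c, d, hk, hc, hd, hgcd⟩, hgB⟩ := hg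
    subst hgcd
    have hca : c ≠ a := by rintro rfl; exact hga (Sym2.mem_mk_left _ _)
    have hcb : c ≠ b := by rintro rfl; exact hgb (Sym2.mem_mk_left _ _)
    have hgf : s(c, d) ≠ s(a, b) := by
      intro h; apply hga; rw [h]; exact Sym2.mem_mk_left _ _
    exfalso
    by_cases hk₁ : k₁ = j₁
    · -- use the edge s(b, c)
      have hcr : IsCrossEdge u v s(b, c) :=
        ⟨j₂, k₁, b, c, by rw [hk₁]; exact Ne.symm hj, hb, hc, rfl⟩
      by_cases hbc : s(b, c) ∈ B.edgeSet
      · have h2 := keyB s(b, c) ⟨hcr, hbc⟩ (Sym2.mem_mk_left _ _)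
        rw [Sym2.eq_iff] at h2
        rcases h2 with ⟨-, h2⟩ | ⟨h2, -⟩
        · exact hca h2
        · exact hab h2.symm
      · have hgood2 : IsGoodEdge B u v s(b, c) := ⟨hcr, hbc⟩
        have m1 : s(a, b) ∈ {g : Sym2 V | IsBadEdge B u v g ∧ ∃ z, z ∈ s(b, c) ∧ z ∈ g} :=
          ⟨⟨⟨j₁, j₂, a, b, hj, ha, hb, rfl⟩, hfB⟩, b, Sym2.mem_mk_left _ _,
            Sym2.mem_mk_right _ _⟩
        have m2 : s(c, d) ∈ {g : Sym2 V | IsBadEdge B u v g ∧ ∃ z, z ∈ s(b, c) ∧ z ∈ g} :=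
          ⟨⟨⟨k₁, k₂, c, d, hk, hc, hd, rfl⟩, hgB⟩, c, Sym2.mem_mk_right _ _,
            Sym2.mem_mk_left _ _⟩
        exact hgf (hsub _ hgood2 _ m2 _ m1)
    · -- use the edge s(a, c)
      have hcr : IsCrossEdge u v s(a, c) := ⟨j₁, k₁, a, c, Ne.symm hk₁, ha, hc, rfl⟩
      by_cases hac : s(a, c) ∈ B.edgeSet
      · have h2 := keyA s(a, c) ⟨hcr, hac⟩ (Sym2.mem_mk_left _ _)
        rw [Sym2.eq_iff] at h2
        rcases h2 with ⟨-, h2⟩ | ⟨h2, -⟩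
        · exact hcb h2
        · exact hab h2
      · have hgood2 : IsGoodEdge B u v s(a, c) := ⟨hcr, hac⟩
        have m1 : s(a, b) ∈ {g : Sym2 V | IsBadEdge B u v g ∧ ∃ z, z ∈ s(a, c) ∧ z ∈ g} :=
          ⟨⟨⟨j₁, j₂, a, b, hj, ha, hb, rfl⟩, hfB⟩, a, Sym2.mem_mk_left _ _,
            Sym2.mem_mk_left _ _⟩
        have m2 : s(c, d) ∈ {g : Sym2 V | IsBadEdge B u v g ∧ ∃ z, z ∈ s(a, c) ∧ z ∈ g} :=
          ⟨⟨⟨k₁, k₂, c, d, hk, hc, hd, rfl⟩, hgB⟩, c, Sym2.mem_mk_right _ _,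
            Sym2.mem_mk_left _ _⟩
        exact hgf (hsub _ hgood2 _ m2 _ m1)
  -- hence `Dval e = 0`
  have hD0 : Dval B u v s(x, y) = 0 := by
    have hempty : {g : Sym2 V | IsBadEdge B u v g ∧ ∃ z, z ∈ s(x, y) ∧ z ∈ g} = ∅ := by
      rw [Set.eq_empty_iff_forall_notMem]
      rintro g ⟨hg, z, hz1, hz2⟩
      rw [hall g hg] at hz2
      rw [Sym2.mem_iff] at hz1 hz2
      rcases hz1 with rfl | rfl
      · rcases hz2 with h | h
        exacts [hxa h, hxb h]
      · rcases hz2 with h | h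
        exacts [hya h, hyb h]
    show Set.ncard _ = 0
    rw [hempty, Set.ncard_empty]
  -- final contradiction via the good edge from `key`
  have hle := hmax e₀ he₀
  rw [hD0, Nat.le_zero] at hle
  have : ({g : Sym2 V | IsBadEdge B u v g ∧ ∃ z, z ∈ e₀ ∧ z ∈ g}).ncard = 0 := hle
  rw [Set.ncard_eq_zero (Set.toFinite _)] at this
  rw [this] at hfe₀
  exact hfe₀

/-- Suppose `𝒫` consists of `p > 2` pairwise vertex-disjoint paths of `K_n`, each with at
least one edge, and the number of bad edges satisfies `br < 2p - 2`. Let `e = s(x,y)` be a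
good edge maximizing `D(e)`, joining the endpoint `x` of the path `P i₁` to the endpoint
`y` of the different path `P i₂`. Let `𝒫'` be the family obtained by merging `P i₁` and
`P i₂` along `e` (so the endpoints of the merged path are the endpoints of `P i₁` and
`P i₂` other than `x` and `y`), with `p' = p - 1` paths. Then the number `br'` of bad
edges w.r.t. `𝒫'` satisfies `br' < 2p' - 2`, and moreover `br' = 0` whenever `D(e) ≤ 1`. -/
theorem bad_edges_after_merge
    {V : Type*} [Fintype V] [DecidableEq V]
    (B : SimpleGraph V) (t : ℕ) (ht : 2 < t) (u v : Fin t → V)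
    (P : ∀ i : Fin t, (⊤ : SimpleGraph V).Walk (u i) (v i))
    (hP : ∀ i, (P i).IsPath) (hne : ∀ i, u i ≠ v i)
    (hdisj : ∀ i j, i ≠ j → List.Disjoint (P i).support (P j).support)
    (hbr : Set.ncard {e : Sym2 V | IsBadEdge B u v e} < 2 * t - 2)
    (i₁ i₂ : Fin t) (hi : i₁ ≠ i₂) (x y : V)
    (hx : x = u i₁ ∨ x = v i₁) (hy : y = u i₂ ∨ y = v i₂)
    (he : IsGoodEdge B u v s(x, y))
    (hmax : ∀ f, IsGoodEdge B u v f → Dval B u v f ≤ Dval B u v s(x, y)) :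
    -- the merged family `𝒫'`, indexed by the indices different from `i₂`:
    -- the path `P i₁` is replaced by the merged path, whose endpoints are the
    -- endpoint of `P i₁` other than `x` and the endpoint of `P i₂` other than `y`.
    Set.ncard {f : Sym2 V | IsBadEdge B
        (fun i : {i : Fin t // i ≠ i₂} =>
          if i.1 = i₁ then (if x = u i₁ then v i₁ else u i₁) else u i.1)
        (fun i : {i : Fin t // i ≠ i₂} =>
          if i.1 = i₁ then (if y = u i₂ then v i₂ else u i₂) else v i.1) f}
      < 2 * (t - 1) - 2 ∧
    (Dval B u v s(x, y) ≤ 1 →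
      Set.ncard {f : Sym2 V | IsBadEdge B
        (fun i : {i : Fin t // i ≠ i₂} =>
          if i.1 = i₁ then (if x = u i₁ then v i₁ else u i₁) else u i.1)
        (fun i : {i : Fin t // i ≠ i₂} =>
          if i.1 = i₁ then (if y = u i₂ then v i₂ else u i₂) else v i.1) f} = 0) := by
  classical
  have hsep : ∀ (k k' : Fin t) (w : V), (w = u k ∨ w = v k) → (w = u k' ∨ w = v k') →
      k = k' := by
    intro k k' w h1 h2
    by_contra hkk
    have m1 : w ∈ (P k).support := by
      rcases h1 with rfl | rfl
      exacts [SimpleGraph.Walk.start_mem_support _, SimpleGraph.Walk.end_mem_support _]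
    have m2 : w ∈ (P k').support := by
      rcases h2 with rfl | rfl
      exacts [SimpleGraph.Walk.start_mem_support _, SimpleGraph.Walk.end_mem_support _]
    exact hdisj k k' hkk m1 m2
  set x' := if x = u i₁ then v i₁ else u i₁ with hx'def
  set y' := if y = u i₂ then v i₂ else u i₂ with hy'def
  set u' : {i : Fin t // i ≠ i₂} → V := fun i => if i.1 = i₁ then x' else u i.1 with hu'def
  set v' : {i : Fin t // i ≠ i₂} → V := fun i => if i.1 = i₁ then y' else v i.1 with hv'def
  have hx'e : x' = u i₁ ∨ x' = v i₁ := by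
    rw [hx'def]; split_ifs; exacts [Or.inr rfl, Or.inl rfl]
  have hy'e : y' = u i₂ ∨ y' = v i₂ := by
    rw [hy'def]; split_ifs; exacts [Or.inr rfl, Or.inl rfl]
  have hx'x : x' ≠ x := by
    rw [hx'def]; split_ifs with h
    · intro hh; exact hne i₁ (hh.trans h).symm
    · intro hh; exact h hh.symm
  have hy'y : y' ≠ y := by
    rw [hy'def]; split_ifs with h
    · intro hh; exact hne i₂ (hh.trans h).symm
    · intro hh; exact h hh.symm
  -- every endpoint of the merged family is an old endpoint avoiding x and y
  have htrans : ∀ (i : {i : Fin t // i ≠ i₂}) (c : V), (c = u' i ∨ c = v' i) →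
      ∃ k : Fin t, (c = u k ∨ c = v k) ∧ c ≠ x ∧ c ≠ y ∧
        (i.1 = i₁ → (k = i₁ ∨ k = i₂)) ∧ (i.1 ≠ i₁ → k = i.1) := by
    rintro ⟨i, hi2⟩ c hc
    by_cases hii : i = i₁
    · simp [hu'def, hv'def, hii] at hc
      rcases hc with rfl | rfl
      · refine ⟨i₁, hx'e, hx'x, ?_, fun _ => Or.inl rfl, fun h => absurd hii h⟩
        intro h
        exact hi (hsep i₁ i₂ x' hx'e (by rw [h]; exact hy))
      · refine ⟨i₂, hy'e, ?_, hy'y, fun _ => Or.inr rfl, fun h => absurd hii h⟩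
        intro h
        exact hi (hsep i₂ i₁ y' hy'e (by rw [h]; exact hx)).symm
    · simp [hu'def, hv'def, hii] at hc
      refine ⟨i, hc, ?_, ?_, fun h => absurd h hii, fun _ => rfl⟩
      · exact fun h => hii (hsep i i₁ c hc (by rw [h]; exact hx))
      · exact fun h => hi2 (hsep i i₂ c hc (by rw [h]; exact hy))
  have hnewsub : {f : Sym2 V | IsBadEdge B u' v' f} ⊆
      {f : Sym2 V | IsBadEdge B u v f ∧ x ∉ f ∧ y ∉ f} := by
    rintro f ⟨⟨i, j, c, d, hij, hc, hd, rfl⟩, hfB⟩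
    obtain ⟨k₁, hc₁, hcx, hcy, hA1, hA2⟩ := htrans i c hc
    obtain ⟨k₂, hd₁, hdx, hdy, hB1, hB2⟩ := htrans j d hd
    have hk : k₁ ≠ k₂ := by
      intro h
      by_cases h1 : i.1 = i₁ <;> by_cases h2 : j.1 = i₁
      · exact hij (Subtype.ext (h1.trans h2.symm))
      · rcases hA1 h1 with rfl | rfl
        · exact h2 ((h.trans (hB2 h2)).symm)
        · exact j.2 ((h.trans (hB2 h2)).symm)
      · rcases hB1 h2 with rfl | rfl
        · exact h1 ((h.symm.trans (hA2 h1)).symm)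
        · exact i.2 ((h.symm.trans (hA2 h1)).symm)
      · exact hij (Subtype.ext ((hA2 h1).symm.trans (h.trans (hB2 h2))))
    refine ⟨⟨⟨k₁, k₂, c, d, hk, hc₁, hd₁, rfl⟩, hfB⟩, ?_, ?_⟩ <;>
      rw [Sym2.mem_iff] <;> push_neg
    · exact ⟨Ne.symm hcx, Ne.symm hdx⟩
    · exact ⟨Ne.symm hcy, Ne.symm hdy⟩
  rcases le_or_gt (Dval B u v s(x, y)) 1 with h1 | h2
  · have hempty : {f : Sym2 V | IsBadEdge B u' v' f} = ∅ := by
      rw [Set.eq_empty_iff_forall_notMem]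
      intro f hf
      obtain ⟨hbad, hfx, hfy⟩ := hnewsub hf
      exact core_no_far_bad B t ht u v hne hsep hbr x y hmax h1 f hbad hfx hfy
    rw [hempty, Set.ncard_empty]
    exact ⟨by omega, fun _ => rfl⟩
  · have hsub2 : {f : Sym2 V | IsBadEdge B u' v' f} ⊆
        {f : Sym2 V | IsBadEdge B u v f} \
          {g : Sym2 V | IsBadEdge B u v g ∧ ∃ z, z ∈ s(x, y) ∧ z ∈ g} := by
      intro f hf
      obtain ⟨hbad, hfx, hfy⟩ := hnewsub hf
      refine ⟨hbad, ?_⟩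
      rintro ⟨-, z, hz1, hz2⟩
      rw [Sym2.mem_iff] at hz1
      rcases hz1 with rfl | rfl
      exacts [hfx hz2, hfy hz2]
    have h3 := Set.ncard_le_ncard hsub2 (Set.toFinite _)
    rw [Set.ncard_diff (fun g hg => hg.1) (Set.toFinite _)] at h3
    have hDd : Dval B u v s(x, y) =
        Set.ncard {g : Sym2 V | IsBadEdge B u v g ∧ ∃ z, z ∈ s(x, y) ∧ z ∈ g} := rfl
    rw [← hDd] at h3
    constructor
    · omega
    · intro hD1; omega
end

section
/- Suppose |𝒫| = 4, there are exactly 4 bad edges, and D(e) ≤ 2 holds for every good edge e. Then either the 4 bad edges are pairwise vertex-disjoint (forming a perfect matching on the 8 vertices of End(𝒫)), or the 4 bad edges form a cycle of length 4 and the remaining 4 vertices of End(𝒫) are incident with no bad edge. -/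
/-- Suppose `𝒫` consists of exactly 4 pairwise vertex-disjoint paths of `K_n`, each with
at least one edge, there are exactly 4 bad edges, and `D(e) ≤ 2` for every good edge `e`.
Then either the 4 bad edges are pairwise vertex-disjoint (forming a perfect matching on
the 8 vertices of `End(𝒫)`), or they form a cycle of length 4 and the remaining 4
vertices of `End(𝒫)` are incident with no bad edge. -/
theorem bad_edges_matching_or_four_cycle
    {V : Type*} [Fintype V] [DecidableEq V]
    (B : SimpleGraph V) (u v : Fin 4 → V)
    (P : ∀ i : Fin 4, (⊤ : SimpleGraph V).Walk (u i) (v i))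
    (hP : ∀ i, (P i).IsPath) (hne : ∀ i, u i ≠ v i)
    (hdisj : ∀ i j, i ≠ j → List.Disjoint (P i).support (P j).support)
    (hbr : Set.ncard {e : Sym2 V | IsBadEdge B u v e} = 4)
    (hD : ∀ e, IsGoodEdge B u v e → Dval B u v e ≤ 2) :
    (({e : Sym2 V | IsBadEdge B u v e}).Pairwise (fun e f => ∀ z, z ∈ e → z ∉ f) ∧
      ∀ z ∈ endpointSet u v, ∃ e, IsBadEdge B u v e ∧ z ∈ e) ∨
    (∃ a b c d : V, a ≠ b ∧ a ≠ c ∧ a ≠ d ∧ b ≠ c ∧ b ≠ d ∧ c ≠ d ∧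
      {e : Sym2 V | IsBadEdge B u v e} = {s(a, b), s(b, c), s(c, d), s(d, a)} ∧
      ∀ z ∈ endpointSet u v, z ∉ ({a, b, c, d} : Set V) →
        ∀ e, IsBadEdge B u v e → z ∉ e) := by
  classical
  -- distinctness of endpoints across different paths
  have hdistinct : ∀ i j : Fin 4, i ≠ j → ∀ x y : V,
      (x = u i ∨ x = v i) → (y = u j ∨ y = v j) → x ≠ y := by
    intro i j hij x y hx hy hxy
    refine hdisj i j hij (a := x) ?_ ?_
    · rcases hx with rfl | rfl
      · exact (P i).start_mem_support
      · exact (P i).end_mem_support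
    · rw [hxy]
      rcases hy with rfl | rfl
      · exact (P j).start_mem_support
      · exact (P j).end_mem_support
  -- each endpoint belongs to a unique path
  have hupath : ∀ (z : V) (i j : Fin 4), (z = u i ∨ z = v i) → (z = u j ∨ z = v j) → i = j := by
    intro z i j hi hj
    by_contra h
    exact hdistinct i j h z z hi hj rfl
  -- bad edge set as a Finset
  have hfin : {e : Sym2 V | IsBadEdge B u v e}.Finite := Set.toFinite _
  set S : Finset (Sym2 V) := hfin.toFinset with hSdef
  have hmemS : ∀ e, e ∈ S ↔ IsBadEdge B u v e := fun e => hfin.mem_toFinset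
  have hScard : S.card = 4 := by
    rw [hSdef, ← Set.ncard_eq_toFinset_card _ hfin, hbr]
  -- endpoint finset
  set E8 : Finset V := Finset.univ.image u ∪ Finset.univ.image v with hE8def
  have hmemE8 : ∀ z, z ∈ E8 ↔ ∃ i, z = u i ∨ z = v i := by
    intro z
    simp [hE8def, eq_comm, or_and_right, exists_or]
  have hE8card : E8.card ≤ 8 := by
    calc E8.card ≤ (Finset.univ.image u).card + (Finset.univ.image v).card :=
          Finset.card_union_le _ _
      _ ≤ 4 + 4 := by
          have h1 : (Finset.univ.image u).card ≤ 4 := by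
            simpa using Finset.card_image_le (s := (Finset.univ : Finset (Fin 4))) (f := u)
          have h2 : (Finset.univ.image v).card ≤ 4 := by
            simpa using Finset.card_image_le (s := (Finset.univ : Finset (Fin 4))) (f := v)
          omega
      _ = 8 := rfl
  -- degree
  set deg : V → ℕ := fun z => (S.filter (fun e => z ∈ e)).card with hdegdef
  -- structure of bad edges
  have hbadform : ∀ e ∈ S, ∀ x : V, x ∈ e → ∃ (y : V) (i j : Fin 4), i ≠ j ∧
      (x = u i ∨ x = v i) ∧ (y = u j ∨ y = v j) ∧ e = s(x, y) := by
    intro e he x hx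
    obtain ⟨⟨i, j, p, q, hij, hp, hq, rfl⟩, hB⟩ := (hmemS e).1 he
    rcases Sym2.mem_iff.1 hx with rfl | rfl
    · exact ⟨q, i, j, hij, hp, hq, rfl⟩
    · exact ⟨p, j, i, hij.symm, hq, hp, Sym2.eq_swap⟩
  -- double counting
  have hsum : ∑ z ∈ E8, deg z = 8 := by
    have hcnt : ∀ e ∈ S, (E8.filter (fun z => z ∈ e)).card = 2 := by
      intro e he
      obtain ⟨⟨i, j, p, q, hij, hp, hq, rfl⟩, hB⟩ := (hmemS e).1 he
      have hpq : p ≠ q := hdistinct i j hij p q hp hq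
      have hfilter : E8.filter (fun z => z ∈ s(p, q)) = {p, q} := by
        ext z
        simp only [Finset.mem_filter, Sym2.mem_iff, Finset.mem_insert, Finset.mem_singleton]
        constructor
        · rintro ⟨_, h⟩; exact h
        · rintro (rfl | rfl)
          · exact ⟨(hmemE8 z).2 ⟨i, hp⟩, Or.inl rfl⟩
          · exact ⟨(hmemE8 z).2 ⟨j, hq⟩, Or.inr rfl⟩
      rw [hfilter, Finset.card_insert_of_notMem (by simpa using hpq), Finset.card_singleton]
    calc ∑ z ∈ E8, deg z = ∑ z ∈ E8, ∑ e ∈ S, if z ∈ e then 1 else 0 := by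
          exact Finset.sum_congr rfl fun z _ => Finset.card_filter _ _
      _ = ∑ e ∈ S, ∑ z ∈ E8, if z ∈ e then 1 else 0 := Finset.sum_comm
      _ = ∑ e ∈ S, (E8.filter (fun z => z ∈ e)).card := by
          refine Finset.sum_congr rfl fun e _ => ?_
          exact (Finset.card_filter _ _).symm
      _ = ∑ e ∈ S, 2 := Finset.sum_congr rfl hcnt
      _ = 8 := by rw [Finset.sum_const, hScard]; norm_num
  -- translation of the good-edge degree bound
  have hDgood : ∀ (x y : V) (i j : Fin 4), i ≠ j → (x = u i ∨ x = v i) → (y = u j ∨ y = v j) →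
      s(x, y) ∉ B.edgeSet → deg x + deg y ≤ 2 := by
    intro x y i j hij hx hy hB
    have hxy : x ≠ y := hdistinct i j hij x y hx hy
    have hgood : IsGoodEdge B u v s(x, y) := ⟨⟨i, j, x, y, hij, hx, hy, rfl⟩, hB⟩
    have h2 := hD _ hgood
    have hset : {f : Sym2 V | IsBadEdge B u v f ∧ ∃ z, z ∈ s(x, y) ∧ z ∈ f}
        = ↑(S.filter (fun f => x ∈ f) ∪ S.filter (fun f => y ∈ f)) := by
      ext f
      simp only [Set.mem_setOf_eq, Finset.coe_union, Set.mem_union, Finset.mem_coe,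
        Finset.mem_filter, ← hmemS, Sym2.mem_iff]
      constructor
      · rintro ⟨hb, z, (rfl | rfl), hz⟩
        · exact Or.inl ⟨hb, hz⟩
        · exact Or.inr ⟨hb, hz⟩
      · rintro (⟨hb, hz⟩ | ⟨hb, hz⟩)
        · exact ⟨hb, x, Or.inl rfl, hz⟩
        · exact ⟨hb, y, Or.inr rfl, hz⟩
    have hdisjxy : Disjoint (S.filter (fun f => x ∈ f)) (S.filter (fun f => y ∈ f)) := by
      refine Finset.disjoint_left.2 ?_
      intro f hf1 hf2
      obtain ⟨hfS, hxf⟩ := Finset.mem_filter.1 hf1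
      obtain ⟨_, hyf⟩ := Finset.mem_filter.1 hf2
      have hfeq : f = s(x, y) := (Sym2.mem_and_mem_iff hxy).1 ⟨hxf, hyf⟩
      have hbf := (hmemS f).1 hfS
      rw [hfeq] at hbf
      exact hB hbf.2
    have hdval : Dval B u v s(x, y) = deg x + deg y := by
      rw [Dval, hset, Set.ncard_coe_finset, Finset.card_union_of_disjoint hdisjxy]
    omega
  -- global degree bound
  have hdeg2 : ∀ (x : V) (i : Fin 4), (x = u i ∨ x = v i) → deg x ≤ 2 := by
    intro x i hx
    by_contra hgt
    push_neg at hgt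
    have hall : ∀ j : Fin 4, j ≠ i → ∀ y : V, (y = u j ∨ y = v j) → s(x, y) ∈ S := by
      intro j hj y hy
      by_contra hb
      have hnB : s(x, y) ∉ B.edgeSet := by
        intro hBmem
        exact hb ((hmemS _).2 ⟨⟨i, j, x, y, Ne.symm hj, hx, hy, rfl⟩, hBmem⟩)
      have := hDgood x y i j (Ne.symm hj) hx hy hnB
      omega
    have htriple : ∀ i' : Fin 4,
        ∃ j1 j2 j3 : Fin 4, j1 ≠ i' ∧ j2 ≠ i' ∧ j3 ≠ i' ∧ j1 ≠ j2 ∧ j1 ≠ j3 ∧ j2 ≠ j3 := by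
      decide
    obtain ⟨j1, j2, j3, h1, h2, h3, h12, h13, h23⟩ := htriple i
    set N : Finset V := {u j1, v j1, u j2, v j2, u j3, v j3} with hNdef
    have hNcard : N.card = 6 := by
      have d1 := hne j1
      have d2 := hne j2
      have d3 := hne j3
      have e12 := hdistinct j1 j2 h12
      have e13 := hdistinct j1 j3 h13
      have e23 := hdistinct j2 j3 h23
      rw [hNdef]
      rw [Finset.card_insert_of_notMem (by
        simp only [Finset.mem_insert, Finset.mem_singleton]
        push_neg
        exact ⟨d1, e12 _ _ (Or.inl rfl) (Or.inl rfl), e12 _ _ (Or.inl rfl) (Or.inr rfl),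
          e13 _ _ (Or.inl rfl) (Or.inl rfl), e13 _ _ (Or.inl rfl) (Or.inr rfl)⟩)]
      rw [Finset.card_insert_of_notMem (by
        simp only [Finset.mem_insert, Finset.mem_singleton]
        push_neg
        exact ⟨e12 _ _ (Or.inr rfl) (Or.inl rfl), e12 _ _ (Or.inr rfl) (Or.inr rfl),
          e13 _ _ (Or.inr rfl) (Or.inl rfl), e13 _ _ (Or.inr rfl) (Or.inr rfl)⟩)]
      rw [Finset.card_insert_of_notMem (by
        simp only [Finset.mem_insert, Finset.mem_singleton]
        push_neg
        exact ⟨d2, e23 _ _ (Or.inl rfl) (Or.inl rfl), e23 _ _ (Or.inl rfl) (Or.inr rfl)⟩)]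
      rw [Finset.card_insert_of_notMem (by
        simp only [Finset.mem_insert, Finset.mem_singleton]
        push_neg
        exact ⟨e23 _ _ (Or.inr rfl) (Or.inl rfl), e23 _ _ (Or.inr rfl) (Or.inr rfl)⟩)]
      rw [Finset.card_insert_of_notMem (by simpa using d3), Finset.card_singleton]
    have hxN : ∀ y ∈ N, x ≠ y := by
      intro y hy
      rw [hNdef] at hy
      simp only [Finset.mem_insert, Finset.mem_singleton] at hy
      rcases hy with rfl | rfl | rfl | rfl | rfl | rfl
      · exact hdistinct i j1 (Ne.symm h1) x _ hx (Or.inl rfl)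
      · exact hdistinct i j1 (Ne.symm h1) x _ hx (Or.inr rfl)
      · exact hdistinct i j2 (Ne.symm h2) x _ hx (Or.inl rfl)
      · exact hdistinct i j2 (Ne.symm h2) x _ hx (Or.inr rfl)
      · exact hdistinct i j3 (Ne.symm h3) x _ hx (Or.inl rfl)
      · exact hdistinct i j3 (Ne.symm h3) x _ hx (Or.inr rfl)
    have hle : N.card ≤ S.card := by
      refine Finset.card_le_card_of_injOn (fun y => s(x, y)) ?_ ?_
      · intro y hy
        rw [hNdef] at hy
        simp only [Finset.mem_coe, Finset.mem_insert, Finset.mem_singleton] at hy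
        rcases hy with rfl | rfl | rfl | rfl | rfl | rfl
        · exact hall j1 h1 _ (Or.inl rfl)
        · exact hall j1 h1 _ (Or.inr rfl)
        · exact hall j2 h2 _ (Or.inl rfl)
        · exact hall j2 h2 _ (Or.inr rfl)
        · exact hall j3 h3 _ (Or.inl rfl)
        · exact hall j3 h3 _ (Or.inr rfl)
      · intro y1 _ y2 _ hyy
        exact Sym2.congr_right.1 hyy
    omega
  -- membership of bad-edge vertices in E8
  have hbadmem : ∀ e ∈ S, ∀ z : V, z ∈ e → z ∈ E8 := by
    intro e he z hz
    obtain ⟨y, i, j, _, hzp, _, _⟩ := hbadform e he z hz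
    exact (hmemE8 z).2 ⟨i, hzp⟩
  have hdegpos : ∀ (z : V) (e : Sym2 V), e ∈ S → z ∈ e → 1 ≤ deg z := by
    intro z e he hz
    exact Finset.card_pos.2 ⟨e, Finset.mem_filter.2 ⟨he, hz⟩⟩
  have hEndE8 : ∀ z, z ∈ endpointSet u v ↔ z ∈ E8 := by
    intro z
    rw [hmemE8]
    constructor
    · rintro (⟨i, rfl⟩ | ⟨i, rfl⟩)
      · exact ⟨i, Or.inl rfl⟩
      · exact ⟨i, Or.inr rfl⟩
    · rintro ⟨i, rfl | rfl⟩
      · exact Or.inl ⟨i, rfl⟩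
      · exact Or.inr ⟨i, rfl⟩
  by_cases hcase : ∀ z ∈ E8, deg z ≤ 1
  · -- perfect matching case
    left
    have hdeg1 : ∀ z ∈ E8, deg z = 1 := by
      by_contra h
      push_neg at h
      obtain ⟨z0, hz0, hz0ne⟩ := h
      have hz00 : deg z0 = 0 := by have := hcase z0 hz0; omega
      have hsum' : ∑ z ∈ E8.erase z0, deg z = 8 := by
        have := Finset.add_sum_erase E8 deg hz0
        omega
      have hle : ∑ z ∈ E8.erase z0, deg z ≤ (E8.erase z0).card • 1 :=
        Finset.sum_le_card_nsmul _ _ 1 (fun z hz => hcase z (Finset.mem_of_mem_erase hz))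
      have hec : (E8.erase z0).card = E8.card - 1 := Finset.card_erase_of_mem hz0
      have : 1 ≤ E8.card := Finset.card_pos.2 ⟨z0, hz0⟩
      simp only [smul_eq_mul, mul_one] at hle
      omega
    constructor
    · intro e he f hf hef z hze hzf
      have heS : e ∈ S := (hmemS e).2 he
      have hfS : f ∈ S := (hmemS f).2 hf
      have hzE8 : z ∈ E8 := hbadmem e heS z hze
      have hsub : ({e, f} : Finset (Sym2 V)) ⊆ S.filter (fun g => z ∈ g) := by
        intro g hg
        simp only [Finset.mem_insert, Finset.mem_singleton] at hg
        rcases hg with rfl | rfl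
        · exact Finset.mem_filter.2 ⟨heS, hze⟩
        · exact Finset.mem_filter.2 ⟨hfS, hzf⟩
      have h2 : ({e, f} : Finset (Sym2 V)).card = 2 := Finset.card_pair hef
      have hle2 := Finset.card_le_card hsub
      have hc1 : (S.filter (fun g => z ∈ g)).card ≤ 1 := hcase z hzE8
      omega
    · intro z hz
      have hzE8 : z ∈ E8 := (hEndE8 z).1 hz
      have h1 : deg z = 1 := hdeg1 z hzE8
      have h1' : (S.filter (fun e => z ∈ e)).card = 1 := h1
      have hpos : 0 < (S.filter (fun e => z ∈ e)).card := by omega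
      obtain ⟨e, he⟩ := Finset.card_pos.1 hpos
      obtain ⟨heS, hze⟩ := Finset.mem_filter.1 he
      exact ⟨e, (hmemS e).1 heS, hze⟩
  · -- 4-cycle case
    right
    push_neg at hcase
    obtain ⟨x, hxE8, hx1⟩ := hcase
    obtain ⟨i, hx⟩ := (hmemE8 x).1 hxE8
    have hdx : deg x = 2 := by
      have := hdeg2 x i hx
      omega
    -- the partner of x
    obtain ⟨x', hx', hxx', hother⟩ : ∃ x', (x' = u i ∨ x' = v i) ∧ x ≠ x' ∧
        ∀ z : V, (z = u i ∨ z = v i) → z = x ∨ z = x' := by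
      rcases hx with rfl | rfl
      · exact ⟨v i, Or.inr rfl, hne i, fun z hz => hz⟩
      · exact ⟨u i, Or.inl rfl, (hne i).symm, fun z hz => hz.symm⟩
    -- the two bad edges at x
    obtain ⟨e1, e2, hee, hfx⟩ := Finset.card_eq_two.1
      (show (S.filter (fun e => x ∈ e)).card = 2 from hdx)
    have he1mem : e1 ∈ S.filter (fun e => x ∈ e) := by rw [hfx]; simp
    have he2mem : e2 ∈ S.filter (fun e => x ∈ e) := by rw [hfx]; simp
    obtain ⟨he1S, hxe1⟩ := Finset.mem_filter.1 he1mem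
    obtain ⟨he2S, hxe2⟩ := Finset.mem_filter.1 he2mem
    obtain ⟨y1, i1, j1, hij1, hxi1, hy1, he1⟩ := hbadform e1 he1S x hxe1
    obtain ⟨y2, i2, j2, hij2, hxi2, hy2, he2⟩ := hbadform e2 he2S x hxe2
    have hi1 : i1 = i := hupath x i1 i hxi1 hx
    have hi2 : i2 = i := hupath x i2 i hxi2 hx
    rw [hi1] at hij1 hxi1
    rw [hi2] at hij2 hxi2
    have hj1 : j1 ≠ i := fun h => hij1 h.symm
    have hj2 : j2 ≠ i := fun h => hij2 h.symm
    have hy12 : y1 ≠ y2 := by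
      intro h
      apply hee
      rw [he1, he2, h]
    -- distinctness
    have hxy1 : x ≠ y1 := hdistinct i j1 hij1 x y1 hx hy1
    have hxy2 : x ≠ y2 := hdistinct i j2 hij2 x y2 hx hy2
    have hx'y1 : x' ≠ y1 := hdistinct i j1 hij1 x' y1 hx' hy1
    have hx'y2 : x' ≠ y2 := hdistinct i j2 hij2 x' y2 hx' hy2
    -- cross-neighbors of x other than y1, y2 have degree 0
    have hzero : ∀ (w : V) (j : Fin 4), j ≠ i → (w = u j ∨ w = v j) →
        w ≠ y1 → w ≠ y2 → deg w = 0 := by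
      intro w j hj hw hw1 hw2
      have hxw : x ≠ w := hdistinct i j (Ne.symm hj) x w hx hw
      have hnB : s(x, w) ∉ B.edgeSet := by
        intro hBmem
        have hmem : s(x, w) ∈ S.filter (fun e => x ∈ e) :=
          Finset.mem_filter.2 ⟨(hmemS _).2 ⟨⟨i, j, x, w, Ne.symm hj, hx, hw, rfl⟩, hBmem⟩,
            Sym2.mem_mk_left x w⟩
        rw [hfx] at hmem
        simp only [Finset.mem_insert, Finset.mem_singleton] at hmem
        rcases hmem with h | h
        · rw [he1] at h
          exact hw1 (Sym2.congr_right.1 h)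
        · rw [he2] at h
          exact hw2 (Sym2.congr_right.1 h)
      have := hDgood x w i j (Ne.symm hj) hx hw hnB
      omega
    -- everything outside {x, x', y1, y2} has degree 0
    have hout : ∀ z ∈ E8, z ∉ ({x, x', y1, y2} : Finset V) → deg z = 0 := by
      intro z hz hznot
      simp only [Finset.mem_insert, Finset.mem_singleton] at hznot
      push_neg at hznot
      obtain ⟨hz1, hz2, hz3, hz4⟩ := hznot
      obtain ⟨k, hk⟩ := (hmemE8 z).1 hz
      by_cases hki : k = i
      · subst hki
        rcases hother z hk with rfl | rfl
        · exact absurd rfl hz1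
        · exact absurd rfl hz2
      · exact hzero z k hki hk hz3 hz4
    -- the sum over {x, x', y1, y2}
    have hTsub : ({x, x', y1, y2} : Finset V) ⊆ E8 := by
      intro z hz
      simp only [Finset.mem_insert, Finset.mem_singleton] at hz
      rcases hz with rfl | rfl | rfl | rfl
      · exact hxE8
      · exact (hmemE8 _).2 ⟨i, hx'⟩
      · exact (hmemE8 _).2 ⟨j1, hy1⟩
      · exact (hmemE8 _).2 ⟨j2, hy2⟩
    have hsumT : deg x + (deg x' + (deg y1 + deg y2)) = 8 := by
      have heq : ∑ z ∈ ({x, x', y1, y2} : Finset V), deg z = ∑ z ∈ E8, deg z :=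
        Finset.sum_subset hTsub (fun z hz hznot => hout z hz hznot)
      rw [hsum] at heq
      rw [← heq]
      rw [Finset.sum_insert (by
        simp only [Finset.mem_insert, Finset.mem_singleton]
        push_neg
        exact ⟨hxx', hxy1, hxy2⟩)]
      rw [Finset.sum_insert (by
        simp only [Finset.mem_insert, Finset.mem_singleton]
        push_neg
        exact ⟨hx'y1, hx'y2⟩)]
      rw [Finset.sum_insert (by simpa using hy12), Finset.sum_singleton]
    have hdx' : deg x' = 2 := by
      have h1 := hdeg2 x' i hx'
      have h2 := hdeg2 y1 j1 hy1
      have h3 := hdeg2 y2 j2 hy2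
      omega
    -- the two bad edges at x'
    obtain ⟨f1, f2, hff, hfx'⟩ := Finset.card_eq_two.1
      (show (S.filter (fun e => x' ∈ e)).card = 2 from hdx')
    have hf1mem : f1 ∈ S.filter (fun e => x' ∈ e) := by rw [hfx']; simp
    have hf2mem : f2 ∈ S.filter (fun e => x' ∈ e) := by rw [hfx']; simp
    obtain ⟨hf1S, hxf1⟩ := Finset.mem_filter.1 hf1mem
    obtain ⟨hf2S, hxf2⟩ := Finset.mem_filter.1 hf2mem
    obtain ⟨w1, i1', j1', hij1', hxi1', hw1, hf1⟩ := hbadform f1 hf1S x' hxf1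
    obtain ⟨w2, i2', j2', hij2', hxi2', hw2, hf2⟩ := hbadform f2 hf2S x' hxf2
    have hi1' : i1' = i := hupath x' i1' i hxi1' hx'
    have hi2' : i2' = i := hupath x' i2' i hxi2' hx'
    rw [hi1'] at hij1' hxi1'
    rw [hi2'] at hij2' hxi2'
    have hw1y : w1 = y1 ∨ w1 = y2 := by
      by_contra h
      push_neg at h
      have h0 := hzero w1 j1' (fun hh => hij1' hh.symm) hw1 h.1 h.2
      have h1 := hdegpos w1 f1 hf1S (hf1 ▸ Sym2.mem_mk_right x' w1)
      omega
    have hw2y : w2 = y1 ∨ w2 = y2 := by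
      by_contra h
      push_neg at h
      have h0 := hzero w2 j2' (fun hh => hij2' hh.symm) hw2 h.1 h.2
      have h1 := hdegpos w2 f2 hf2S (hf2 ▸ Sym2.mem_mk_right x' w2)
      omega
    have hw12 : w1 ≠ w2 := by
      intro h
      apply hff
      rw [hf1, hf2, h]
    have hS1 : s(x', y1) ∈ S ∧ s(x', y2) ∈ S := by
      rcases hw1y with rfl | rfl <;> rcases hw2y with rfl | rfl
      · exact absurd rfl hw12
      · exact ⟨hf1 ▸ hf1S, hf2 ▸ hf2S⟩
      · exact ⟨hf2 ▸ hf2S, hf1 ▸ hf1S⟩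
      · exact absurd rfl hw12
    -- the four bad edges
    set F4 : Finset (Sym2 V) := {s(x, y1), s(x, y2), s(x', y1), s(x', y2)} with hF4def
    have hF4sub : F4 ⊆ S := by
      intro g hg
      rw [hF4def] at hg
      simp only [Finset.mem_insert, Finset.mem_singleton] at hg
      rcases hg with rfl | rfl | rfl | rfl
      · exact he1 ▸ he1S
      · exact he2 ▸ he2S
      · exact hS1.1
      · exact hS1.2
    have hF4card : F4.card = 4 := by
      rw [hF4def]
      rw [Finset.card_insert_of_notMem (by
        simp only [Finset.mem_insert, Finset.mem_singleton, Sym2.eq_iff]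
        push_neg
        refine ⟨⟨fun _ => hy12, fun h _ => hxy2 h⟩, ⟨fun h => absurd h hxx', fun h _ => hxy1 h⟩,
          ⟨fun h => absurd h hxx', fun h _ => hxy2 h⟩⟩)]
      rw [Finset.card_insert_of_notMem (by
        simp only [Finset.mem_insert, Finset.mem_singleton, Sym2.eq_iff]
        push_neg
        exact ⟨⟨fun h => absurd h hxx', fun h _ => hxy1 h⟩,
          ⟨fun h => absurd h hxx', fun h _ => hxy2 h⟩⟩)]
      rw [Finset.card_insert_of_notMem (by
        simp only [Finset.mem_singleton, Sym2.eq_iff]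
        push_neg
        exact ⟨fun _ => hy12, fun h _ => hx'y2 h⟩)]
      rw [Finset.card_singleton]
    have hSF4 : F4 = S := Finset.eq_of_subset_of_card_le hF4sub (by omega)
    refine ⟨x, y1, x', y2, hxy1, hxx', hxy2, fun h => hx'y1 h.symm, hy12, hx'y2, ?_, ?_⟩
    · have hg4 : ∀ g : Sym2 V, IsBadEdge B u v g ↔ g ∈ F4 := by
        intro g
        rw [← hmemS g, ← hSF4]
      ext g
      rw [Set.mem_setOf_eq, hg4 g, hF4def]
      simp only [Finset.mem_insert, Finset.mem_singleton, Set.mem_insert_iff,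
        Set.mem_singleton_iff]
      constructor
      · rintro (rfl | rfl | rfl | rfl)
        · exact Or.inl rfl
        · exact Or.inr (Or.inr (Or.inr Sym2.eq_swap))
        · exact Or.inr (Or.inl Sym2.eq_swap)
        · exact Or.inr (Or.inr (Or.inl rfl))
      · rintro (rfl | rfl | rfl | rfl)
        · exact Or.inl rfl
        · exact Or.inr (Or.inr (Or.inl Sym2.eq_swap))
        · exact Or.inr (Or.inr (Or.inr rfl))
        · exact Or.inr (Or.inl Sym2.eq_swap)
    · intro z hz hznot g hg hzg
      have hzE8 : z ∈ E8 := (hEndE8 z).1 hz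
      have hznotF : z ∉ ({x, x', y1, y2} : Finset V) := by
        simp only [Set.mem_insert_iff, Set.mem_singleton_iff] at hznot
        push_neg at hznot
        simp only [Finset.mem_insert, Finset.mem_singleton]
        push_neg
        exact ⟨hznot.1, hznot.2.2.1, hznot.2.1, hznot.2.2.2⟩
      have h0 := hout z hzE8 hznotF
      have h1 := hdegpos z g ((hmemS g).2 hg) hzg
      omega
end
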